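/- arXiv:1607.06647 — 10 statements merged into one kernel-verified Lean document; each statement's English description precedes it below -/
import Mathlib

section
/- Every invertible n×n matrix over a field E can be written as a product of two invertible symmetric n×n matrices over E. -/
open Polynomial Module Matrix
namespace Stmt0Aux
variable {E : Type*} [Field E]

noncomputable def rawB (q : E[X]) : E[X] →ₗ[E] E[X] →ₗ[E] E :=
  (LinearMap.mul E E[X]).compr₂ ((Polynomial.lcoeff E (q.natDegree - 1)).comp
    (Polynomial.modByMonicHom q))

abbrev W (q : E[X]) : Type _ := E[X] ⧸ (Ideal.span {q} : Ideal E[X])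

noncomputable def bformAux (q : E[X]) (hq : q.Monic) :
    W q →ₗ[E] W q →ₗ[E] E := by
  refine LinearMap.flip (Submodule.liftQ _ (LinearMap.flip (Submodule.liftQ _ (rawB q)
      fun x hx => ?_)) ?_) |>.compl₁₂
    ((Submodule.Quotient.restrictScalarsEquiv E (Ideal.span {q})).symm.toLinearMap)
    ((Submodule.Quotient.restrictScalarsEquiv E (Ideal.span {q})).symm.toLinearMap)
  · obtain ⟨c, rfl⟩ := Ideal.mem_span_singleton'.mp hx
    refine LinearMap.ext fun y => ?_
    show ((c * q * y) %ₘ q).coeff (q.natDegree - 1) = 0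
    rw [(Polynomial.modByMonic_eq_zero_iff_dvd hq).mpr ⟨c * y, by ring⟩]
    exact Polynomial.coeff_zero _
  · intro y hy
    refine LinearMap.ext fun x => ?_
    obtain ⟨x, rfl⟩ := Submodule.Quotient.mk_surjective _ x
    show ((x * y) %ₘ q).coeff (q.natDegree - 1) = 0
    rw [(Polynomial.modByMonic_eq_zero_iff_dvd hq).mpr ?_]
    · exact Polynomial.coeff_zero _
    · obtain ⟨c, rfl⟩ := Ideal.mem_span_singleton'.mp hy
      exact ⟨c * x, by ring⟩

lemma bformAux_mk (q : E[X]) (hq : q.Monic) (x y : E[X]) :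
    bformAux q hq (Submodule.Quotient.mk x) (Submodule.Quotient.mk y)
      = ((x * y) %ₘ q).coeff (q.natDegree - 1) := rfl

lemma bformAux_comm (q : E[X]) (hq : q.Monic) (x y : W q) :
    bformAux q hq x y = bformAux q hq y x := by
  obtain ⟨x, rfl⟩ := Submodule.Quotient.mk_surjective _ x
  obtain ⟨y, rfl⟩ := Submodule.Quotient.mk_surjective _ y
  rw [bformAux_mk, bformAux_mk, mul_comm]

lemma bformAux_smul (q : E[X]) (hq : q.Monic) (r : E[X]) (x y : W q) :
    bformAux q hq (r • x) y = bformAux q hq x (r • y) := by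
  obtain ⟨x, rfl⟩ := Submodule.Quotient.mk_surjective _ x
  obtain ⟨y, rfl⟩ := Submodule.Quotient.mk_surjective _ y
  rw [← Submodule.Quotient.mk_smul, ← Submodule.Quotient.mk_smul, smul_eq_mul, smul_eq_mul,
    bformAux_mk, bformAux_mk]
  ring_nf

lemma bformAux_nondeg (q : E[X]) (hq : q.Monic) (x : W q) (hx : x ≠ 0) :
    ∃ y, bformAux q hq x y ≠ 0 := by
  obtain ⟨z₀, rfl⟩ := Submodule.Quotient.mk_surjective _ x
  set z := z₀ %ₘ q with hz_def
  have hmkz : (Submodule.Quotient.mk z : W q) = Submodule.Quotient.mk z₀ := by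
    rw [Submodule.Quotient.eq]
    refine Ideal.mem_span_singleton'.mpr ⟨-(z₀ /ₘ q), ?_⟩
    rw [hz_def, Polynomial.modByMonic_eq_sub_mul_div _ q]
    ring
  have hz : z ≠ 0 := by
    rintro h
    rw [← hmkz, h] at hx
    simp at hx
  have hdeg : z.degree < q.degree := Polynomial.degree_modByMonic_lt z₀ hq
  have hk : z.natDegree < q.natDegree := Polynomial.natDegree_lt_natDegree hz hdeg
  set k := z.natDegree
  set m := q.natDegree - 1 - k with hm
  refine ⟨Submodule.Quotient.mk (X ^ m), ?_⟩
  rw [← hmkz, bformAux_mk]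
  have hself : (z * X ^ m) %ₘ q = z * X ^ m := by
    rw [Polynomial.modByMonic_eq_self_iff hq]
    refine lt_of_le_of_lt (Polynomial.degree_mul_le _ _) ?_
    calc z.degree + (X ^ m : E[X]).degree ≤ (k : WithBot ℕ) + m := by
          exact add_le_add Polynomial.degree_le_natDegree (by simpa using Polynomial.degree_X_pow_le m)
      _ < q.degree := by
          rw [Polynomial.degree_eq_natDegree hq.ne_zero]
          norm_cast
          omega
  rw [hself]
  have : q.natDegree - 1 = k + m := by omega
  rw [this, Polynomial.coeff_mul_X_pow]
  exact Polynomial.leadingCoeff_ne_zero.mpr hz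


set_option maxHeartbeats 1000000 in
theorem exists_selfadjoint_form {n : ℕ} (a : Matrix (Fin n) (Fin n) E) :
    ∃ B : (Fin n → E) →ₗ[E] (Fin n → E) →ₗ[E] E,
      (∀ x y, B x y = B y x) ∧
      (∀ x y, B (a.mulVec x) y = B x (a.mulVec y)) ∧
      (∀ x, (∀ y, B x y = 0) → x = 0) := by
  classical
  set f := a.mulVecLin with hf
  have htor : Module.IsTorsion E[X] (Module.AEval' f) :=
    Module.AEval.isTorsion_of_finiteDimensional E (Fin n → E) f
  obtain ⟨ι, hι, p, hp, e, ⟨g⟩⟩ := Module.equiv_directSum_of_isTorsion htor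
  have hpe0 : ∀ i, p i ^ e i ≠ 0 := fun i => pow_ne_zero _ (hp i).ne_zero
  set mq : ι → E[X] := fun i => p i ^ e i * Polynomial.C (p i ^ e i).leadingCoeff⁻¹ with hmq
  have hmono : ∀ i, (mq i).Monic := fun i => Polynomial.monic_mul_leadingCoeff_inv (hpe0 i)
  have hspan : ∀ i, (E[X] ∙ (p i ^ e i)) = (Ideal.span {mq i} : Ideal E[X]) := by
    intro i
    rw [Ideal.submodule_span_eq]
    exact Ideal.span_singleton_eq_span_singleton.mpr
      (associated_mul_unit_right _ _ (Polynomial.isUnit_C.mpr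
        (isUnit_iff_ne_zero.mpr (inv_ne_zero (Polynomial.leadingCoeff_ne_zero.mpr (hpe0 i))))))
  set ε : (i : ι) → ((E[X] ⧸ (E[X] ∙ (p i ^ e i))) ≃ₗ[E[X]] (E[X] ⧸ (Ideal.span {mq i} : Ideal E[X]))) :=
    fun i => Submodule.quotEquivOfEq _ _ (hspan i) with hε
  set D := DirectSum ι (fun i => E[X] ⧸ (E[X] ∙ (p i ^ e i))) with hD
  set projR : (i : ι) → (D →ₗ[E[X]] (E[X] ⧸ (Ideal.span {mq i} : Ideal E[X]))) :=
    fun i => (ε i).toLinearMap ∘ₗ DirectSum.component E[X] ι _ i with hprojR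
  set BD : D →ₗ[E] D →ₗ[E] E :=
    ∑ i : ι, (bformAux (mq i) (hmono i)).compl₁₂
      ((projR i).restrictScalars E) ((projR i).restrictScalars E) with hBD
  have hBD_apply : ∀ x y : D, BD x y = ∑ i : ι, bformAux (mq i) (hmono i) (projR i x) (projR i y) := by
    intro x y
    rw [hBD]
    simp only [LinearMap.coe_sum, Finset.sum_apply, LinearMap.sum_apply,
      LinearMap.compl₁₂_apply, LinearMap.restrictScalars_apply]
  have hBD_comm : ∀ x y : D, BD x y = BD y x := by
    intro x y
    rw [hBD_apply, hBD_apply]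
    exact Finset.sum_congr rfl fun i _ => bformAux_comm _ _ _ _
  have hBD_smul : ∀ (x y : D), BD ((X : E[X]) • x) y = BD x ((X : E[X]) • y) := by
    intro x y
    rw [hBD_apply, hBD_apply]
    refine Finset.sum_congr rfl fun i _ => ?_
    have h1 : projR i ((X : E[X]) • x) = (X : E[X]) • projR i x := _root_.map_smul (projR i) _ _
    have h2 : projR i ((X : E[X]) • y) = (X : E[X]) • projR i y := _root_.map_smul (projR i) _ _
    rw [h1, h2]
    exact bformAux_smul _ _ _ _ _
  have hBD_nondeg : ∀ x : D, (∀ y : D, BD x y = 0) → x = 0 := by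
    intro x hx
    by_contra hx0
    obtain ⟨i, hxi⟩ : ∃ i, x i ≠ 0 := by
      by_contra hc
      push_neg at hc
      exact hx0 (DFinsupp.ext fun i => hc i)
    have hεxi : ε i (x i) ≠ 0 := fun h => hxi ((ε i).map_eq_zero_iff.mp h)
    obtain ⟨w, hw⟩ := bformAux_nondeg (mq i) (hmono i) _ hεxi
    refine hw ?_
    have key := hx (DirectSum.lof E[X] ι _ i ((ε i).symm w))
    rw [hBD_apply] at key
    rw [Finset.sum_eq_single i] at key
    · have e1 : projR i (DirectSum.lof E[X] ι _ i ((ε i).symm w)) = w := by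
        rw [hprojR]
        simp only [LinearMap.comp_apply, LinearEquiv.coe_coe]
        rw [DirectSum.component.lof_self]
        exact (ε i).apply_symm_apply w
      have e2 : projR i x = ε i (x i) := rfl
      rw [e1, e2] at key
      exact key
    · intro j _ hji
      have hz : projR j (DirectSum.lof E[X] ι _ i ((ε i).symm w)) = 0 := by
        rw [hprojR]
        simp only [LinearMap.comp_apply, LinearEquiv.coe_coe]
        rw [DirectSum.component.of, dif_neg (fun h => hji h.symm), map_zero]
      rw [hz, map_zero]
    · intro h
      exact absurd (Finset.mem_univ i) h
  -- pull back to V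
  set G : (Fin n → E) →ₗ[E] D :=
    (((Module.AEval'.of f).restrictScalars E).trans (g.restrictScalars E)).toLinearMap with hG
  have hGinj : Function.Injective G :=
    (((Module.AEval'.of f).restrictScalars E).trans (g.restrictScalars E)).injective
  have hGsurj : Function.Surjective G :=
    (((Module.AEval'.of f).restrictScalars E).trans (g.restrictScalars E)).surjective
  have hGf : ∀ x, G (f x) = (X : E[X]) • G x := by
    intro x
    show g (Module.AEval'.of f (f x)) = (X : E[X]) • g (Module.AEval'.of f x)
    rw [← _root_.map_smul, Module.AEval'.X_smul_of]
  refine ⟨BD.compl₁₂ G G, fun x y => hBD_comm _ _, fun x y => ?_, fun x hx => ?_⟩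
  · simp only [LinearMap.compl₁₂_apply]
    rw [show a.mulVec x = f x from rfl, show a.mulVec y = f y from rfl, hGf, hGf, hBD_smul]
  · have h0 : G x = 0 := by
      apply hBD_nondeg
      intro w
      obtain ⟨y, rfl⟩ := hGsurj w
      exact hx y
    exact hGinj (h0.trans (map_zero G).symm)

end Stmt0Aux


/-- Every invertible n×n matrix over a field `E` is a product of two
invertible symmetric matrices. -/
theorem stmt_0 {E : Type*} [Field E] {n : ℕ} (hn : 0 < n)
    (a : Matrix (Fin n) (Fin n) E) (ha : IsUnit a) :
    ∃ d₁ d₂ : Matrix (Fin n) (Fin n) E,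
      IsUnit d₁ ∧ IsUnit d₂ ∧ d₁.IsSymm ∧ d₂.IsSymm ∧ a = d₁ * d₂ := by
  classical
  obtain ⟨B, hsym, hadj, hnd⟩ := Stmt0Aux.exists_selfadjoint_form a
  set u : Matrix (Fin n) (Fin n) E :=
    Matrix.of fun i j => B (Pi.single i 1) (Pi.single j 1) with hu
  have hbasis : ∀ x : Fin n → E, (∑ i, x i • (Pi.single i 1 : Fin n → E)) = x := by
    intro x
    ext j
    simp [Pi.single_apply]
  have hBav : ∀ (x y : Fin n → E), B x y = ∑ i, x i * B (Pi.single i 1) y := by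
    intro x y
    conv_lhs => rw [← hbasis x]
    rw [map_sum, LinearMap.sum_apply]
    exact Finset.sum_congr rfl fun i _ => by rw [_root_.map_smul, LinearMap.smul_apply, smul_eq_mul]
  have hBav' : ∀ (x y : Fin n → E), B x y = ∑ j, y j * B x (Pi.single j 1) := by
    intro x y
    rw [hsym, hBav]
    exact Finset.sum_congr rfl fun j _ => by rw [hsym]
  have hmv : ∀ (i : Fin n), a.mulVec (Pi.single i 1) = fun k => a k i := by
    intro i
    ext k
    simp [Matrix.mulVec_single]
  -- symmetry of u
  have husymm : u.IsSymm := by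
    ext i j
    exact hsym _ _
  -- intertwining
  have hcomm : aᵀ * u = u * a := by
    ext i j
    rw [Matrix.mul_apply, Matrix.mul_apply]
    have h1 : B (a.mulVec (Pi.single i 1)) (Pi.single j 1)
        = ∑ k, a k i * B (Pi.single k 1) (Pi.single j 1) := by
      rw [hmv i, show (fun k => a k i) = ∑ k, a k i • (Pi.single k 1 : Fin n → E) from ?_, map_sum,
        LinearMap.sum_apply]
      · exact Finset.sum_congr rfl fun k _ => by rw [_root_.map_smul, LinearMap.smul_apply, smul_eq_mul]
      · ext k; simp [Pi.single_apply]
    have h2 : B (Pi.single i 1) (a.mulVec (Pi.single j 1))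
        = ∑ k, a k j * B (Pi.single i 1) (Pi.single k 1) := by
      rw [hsym, hmv j, show (fun k => a k j) = ∑ k, a k j • (Pi.single k 1 : Fin n → E) from ?_, map_sum,
        LinearMap.sum_apply]
      · exact Finset.sum_congr rfl fun k _ => by
          rw [_root_.map_smul, LinearMap.smul_apply, smul_eq_mul, hsym]
      · ext k; simp [Pi.single_apply]
    calc ∑ k, aᵀ i k * u k j = ∑ k, a k i * B (Pi.single k 1) (Pi.single j 1) := rfl
      _ = B (a.mulVec (Pi.single i 1)) (Pi.single j 1) := h1.symm
      _ = B (Pi.single i 1) (a.mulVec (Pi.single j 1)) := hadj _ _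
      _ = ∑ k, a k j * B (Pi.single i 1) (Pi.single k 1) := h2
      _ = ∑ k, u i k * a k j := Finset.sum_congr rfl fun k _ => mul_comm _ _
  -- invertibility of u
  have hker : ∀ v : Fin n → E, u.mulVec v = 0 → v = 0 := by
    intro v hv
    apply hnd
    intro y
    rw [hsym, hBav]
    have hBi : ∀ i, B (Pi.single i 1) v = 0 := by
      intro i
      have h0 : ∑ j, u i j * v j = 0 := by
        have := congr_fun hv i
        simpa [Matrix.mulVec, dotProduct] using this
      rw [hBav']
      rw [← h0]
      exact Finset.sum_congr rfl fun j _ => mul_comm _ _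
    simp [hBi]
  have hudet : IsUnit u.det := by
    rw [isUnit_iff_ne_zero]
    intro h0
    obtain ⟨v, hv0, hv⟩ := (Matrix.exists_mulVec_eq_zero_iff).mpr h0
    exact hv0 (hker v hv)
  have huunit : IsUnit u := (Matrix.isUnit_iff_isUnit_det u).mpr hudet
  have huu : u * u⁻¹ = 1 := Matrix.mul_nonsing_inv u hudet
  have h'uu : u⁻¹ * u = 1 := Matrix.nonsing_inv_mul u hudet
  have huinvsymm : (u⁻¹)ᵀ = u⁻¹ := by
    rw [Matrix.transpose_nonsing_inv, show uᵀ = u from husymm]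
  have huinvunit : IsUnit u⁻¹ := by
    rw [Matrix.isUnit_iff_isUnit_det]
    exact Matrix.isUnit_nonsing_inv_det u hudet
  refine ⟨a * u⁻¹, u, ha.mul huinvunit, huunit, ?_, husymm, by
    rw [Matrix.mul_assoc, h'uu, Matrix.mul_one]⟩
  show (a * u⁻¹)ᵀ = a * u⁻¹
  rw [Matrix.transpose_mul, huinvsymm]
  calc u⁻¹ * aᵀ = u⁻¹ * aᵀ * (u * u⁻¹) := by rw [huu, Matrix.mul_one]
    _ = u⁻¹ * (aᵀ * u) * u⁻¹ := by noncomm_ring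
    _ = u⁻¹ * (u * a) * u⁻¹ := by rw [hcomm]
    _ = (u⁻¹ * u) * (a * u⁻¹) := by noncomm_ring
    _ = a * u⁻¹ := by rw [h'uu, Matrix.one_mul]
end

section
/- Every square matrix over a field is conjugate to its transpose by an invertible symmetric matrix. -/
open Matrix Polynomial
universe u

theorem comp_nondeg {E : Type u} [Field E] (g : E[X]) (hg : g ≠ 0) :
    ∃ lam : (E[X] ⧸ (Ideal.span {g} : Ideal E[X])) →ₗ[E] E,
      ∀ x, (∀ y, lam (x * y) = 0) → x = 0 := by
  set m : E[X] := g * C g.leadingCoeff⁻¹ with hm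
  have hmonic : m.Monic := monic_mul_leadingCoeff_inv hg
  have hassoc : Associated g m := by
    refine associated_mul_unit_right _ _ (isUnit_C.mpr ?_)
    exact inv_ne_zero (leadingCoeff_ne_zero.mpr hg) |> isUnit_iff_ne_zero.mpr
  have hdvd : ∀ r : E[X], g ∣ r ↔ m ∣ r := fun r => hassoc.dvd_iff_dvd_left
  set L : E[X] →ₗ[E] E := (lcoeff E (m.natDegree - 1)).comp (modByMonicHom m) with hL
  have hLapp : ∀ r : E[X], L r = (r %ₘ m).coeff (m.natDegree - 1) := by
    intro r; rw [hL]; rfl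
  have hker : ∀ r ∈ (Ideal.span {g} : Ideal E[X]).restrictScalars E, L r = 0 := by
    intro r hr
    have h1 : m ∣ r := (hdvd r).mp (Ideal.mem_span_singleton.mp hr)
    have h2 : r %ₘ m = 0 := (modByMonic_eq_zero_iff_dvd hmonic).mpr h1
    simp [hLapp, h2]
  set lam : (E[X] ⧸ (Ideal.span {g} : Ideal E[X])) →ₗ[E] E :=
    (Submodule.liftQ ((Ideal.span {g} : Ideal E[X]).restrictScalars E) L (fun r hr => LinearMap.mem_ker.mpr (hker r hr))).comp
      (Submodule.Quotient.restrictScalarsEquiv E (Ideal.span {g} : Ideal E[X])).symm.toLinearMap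
    with hlam
  have hlamapp : ∀ r : E[X], lam (Ideal.Quotient.mk _ r) = (r %ₘ m).coeff (m.natDegree - 1) := by
    intro r
    rw [hlam]
    simp only [LinearMap.coe_comp, LinearEquiv.coe_coe, Function.comp_apply]
    rw [show (Ideal.Quotient.mk (Ideal.span {g}) r :) = Submodule.Quotient.mk r from rfl,
      Submodule.Quotient.restrictScalarsEquiv_symm_mk, Submodule.liftQ_apply]
    exact hLapp r
  refine ⟨lam, fun x hx => ?_⟩
  obtain ⟨r, rfl⟩ := Ideal.Quotient.mk_surjective x
  -- replace r by r %ₘ m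
  have hmk : (Ideal.Quotient.mk (Ideal.span {g}) r) = Ideal.Quotient.mk _ (r %ₘ m) := by
    rw [Ideal.Quotient.mk_eq_mk_iff_sub_mem, Ideal.mem_span_singleton, hdvd]
    have : r - r %ₘ m = m * (r /ₘ m) := by
      rw [eq_comm, ← sub_eq_zero]
      have := modByMonic_add_div r m
      ring_nf
      linear_combination (norm := ring_nf) this
    rw [this]; exact Dvd.intro _ rfl
  rw [hmk] at hx ⊢
  set s := r %ₘ m with hs
  by_cases hs0 : s = 0
  · simp [hs0]
  exfalso
  have hdeg : s.degree < m.degree := degree_modByMonic_lt r hmonic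
  have hnd : s.natDegree < m.natDegree := natDegree_lt_natDegree hs0 hdeg
  set k := m.natDegree - 1 - s.natDegree with hk
  have hsum : s.natDegree + k = m.natDegree - 1 := by omega
  have := hx (Ideal.Quotient.mk _ (X ^ k))
  rw [← _root_.map_mul, hlamapp] at this
  have hself : (s * X ^ k) %ₘ m = s * X ^ k := by
    rw [modByMonic_eq_self_iff hmonic]
    have hne : s * X ^ k ≠ 0 := mul_ne_zero hs0 (pow_ne_zero _ X_ne_zero)
    rw [degree_eq_natDegree hne, degree_eq_natDegree hmonic.ne_zero,
      natDegree_mul hs0 (pow_ne_zero _ X_ne_zero), natDegree_X_pow]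
    exact_mod_cast by omega
  rw [hself] at this
  rw [← hsum, coeff_mul_X_pow] at this
  exact leadingCoeff_ne_zero.mpr hs0 this

theorem exists_symm_bilin {E : Type u} [Field E] {M : Type u} [AddCommGroup M] [Module E M]
    [FiniteDimensional E M] (f : M →ₗ[E] M) :
    ∃ B : M →ₗ[E] M →ₗ[E] E, (∀ x y, B x y = B y x) ∧ (∀ x, (∀ y, B x y = 0) → x = 0) ∧
      (∀ x y, B (f x) y = B x (f y)) := by
  classical
  have htor : Module.IsTorsion E[X] (Module.AEval' f) :=
    Module.AEval.isTorsion_of_finiteDimensional E M f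
  obtain ⟨ι, fι, p, hp, e, ⟨eq0⟩⟩ := Module.equiv_directSum_of_isTorsion
    (h' := inferInstance) htor
  set q : ι → E[X] := fun i => p i ^ e i with hqdef
  have hq : ∀ i, q i ≠ 0 := fun i => pow_ne_zero _ (hp i).ne_zero
  choose lam hlam using fun i => comp_nondeg (q i) (hq i)
  set Q : ι → Type u := fun i => E[X] ⧸ (Ideal.span {q i} : Ideal E[X]) with hQ
  let e1 : Module.AEval' f ≃ₗ[E[X]] ∀ i, Q i :=
    eq0.trans (DirectSum.linearEquivFunOnFintype E[X] ι Q)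
  -- smul-mul lemmas in the quotients
  have hsmul_mul : ∀ (i) (c : E) (z w : Q i), (c • z) * w = c • (z * w) := fun i c z w =>
    smul_mul_assoc c z w
  have hmul_comm : ∀ (i) (z w : Q i), z * w = w * z := fun i z w => mul_comm z w
  have hX_mul : ∀ (i) (z w : Q i), ((X : E[X]) • z) * w = z * ((X : E[X]) • w) := by
    intro i z w
    obtain ⟨r, rfl⟩ := Ideal.Quotient.mk_surjective z
    obtain ⟨s, rfl⟩ := Ideal.Quotient.mk_surjective w
    have h1 : ((X : E[X]) • Ideal.Quotient.mk _ r : Q i) = Ideal.Quotient.mk _ (X * r) := rfl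
    have h2 : ((X : E[X]) • Ideal.Quotient.mk _ s : Q i) = Ideal.Quotient.mk _ (X * s) := rfl
    rw [h1, h2, ← _root_.map_mul, ← _root_.map_mul]
    congr 1; ring
  -- the bilinear form on the product
  let B₀ : (∀ i, Q i) →ₗ[E] (∀ i, Q i) →ₗ[E] E := LinearMap.mk₂ E
    (fun x y => ∑ i, lam i (x i * y i))
    (fun x x' y => by
      simp only [Pi.add_apply, add_mul, map_add, Finset.sum_add_distrib])
    (fun c x y => by
      simp only [Pi.smul_apply, hsmul_mul, _root_.map_smul, smul_eq_mul, Finset.mul_sum])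
    (fun x y y' => by
      simp only [Pi.add_apply, mul_add, map_add, Finset.sum_add_distrib])
    (fun c x y => by
      simp only [Pi.smul_apply, mul_smul_comm, _root_.map_smul, smul_eq_mul, Finset.mul_sum])
  have hB₀_apply : ∀ x y, B₀ x y = ∑ i, lam i (x i * y i) := fun x y => rfl
  -- the map ψ
  let ψ : M →ₗ[E] ∀ i, Q i :=
    (e1.restrictScalars E).toLinearMap ∘ₗ (Module.AEval'.of f).toLinearMap
  have hψ_apply : ∀ x : M, ψ x = e1 (Module.AEval'.of f x) := fun x => rfl
  have hψ_inj : Function.Injective ψ :=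
    (e1.restrictScalars E).injective.comp (Module.AEval'.of f).injective
  have hψ_surj : Function.Surjective ψ :=
    (e1.restrictScalars E).surjective.comp (Module.AEval'.of f).surjective
  have hψf : ∀ x : M, ψ (f x) = (X : E[X]) • ψ x := by
    intro x
    rw [hψ_apply, hψ_apply, ← Module.AEval'.X_smul_of, _root_.map_smul]
  refine ⟨B₀.compl₁₂ ψ ψ, fun x y => ?_, fun x hx => ?_, fun x y => ?_⟩
  · simp only [LinearMap.compl₁₂_apply, hB₀_apply]
    exact Finset.sum_congr rfl fun i _ => by rw [hmul_comm]
  · apply hψ_inj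
    rw [map_zero]
    funext i
    rw [Pi.zero_apply]
    apply hlam i
    intro w
    obtain ⟨y, hy⟩ := hψ_surj (Pi.single i w)
    have := hx y
    simp only [LinearMap.compl₁₂_apply, hB₀_apply, hy] at this
    rw [Finset.sum_eq_single i (fun j _ hj => by
      rw [Pi.single_eq_of_ne hj, mul_zero, map_zero]) (fun h => absurd (Finset.mem_univ i) h)]
      at this
    rwa [Pi.single_eq_same] at this
  · simp only [LinearMap.compl₁₂_apply, hψf, hB₀_apply]
    exact Finset.sum_congr rfl fun i _ => by rw [Pi.smul_apply, Pi.smul_apply, hX_mul]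


/-- Every square matrix over a field is conjugate to its transpose by an
invertible symmetric matrix. -/
theorem stmt_1 {E : Type*} [Field E] {n : ℕ} (a : Matrix (Fin n) (Fin n) E) :
    ∃ d : Matrix (Fin n) (Fin n) E,
      IsUnit d ∧ d.IsSymm ∧ d⁻¹ * a * d = aᵀ := by
  obtain ⟨B, hsymm, hnd, hcompat⟩ := exists_symm_bilin (E := E) (M := Fin n → E) a.mulVecLin
  set d0 : Matrix (Fin n) (Fin n) E :=
    Matrix.of fun i j => B (Pi.single i 1) (Pi.single j 1) with hd0
  have key : ∀ (v : Fin n → E) (L : (Fin n → E) →ₗ[E] E), L v = ∑ i, v i * L (Pi.single i 1) := by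
    intro v L
    conv_lhs => rw [← Finset.univ_sum_single v]
    rw [map_sum]
    refine Finset.sum_congr rfl fun i _ => ?_
    have hsing : (Pi.single i (v i) : Fin n → E) = v i • (Pi.single i 1 : Fin n → E) := by
      ext k; by_cases h : i = k <;> simp [Pi.single_apply, h]
    rw [hsing, _root_.map_smul, smul_eq_mul]
  have hB : ∀ x y : Fin n → E, B x y = x ⬝ᵥ (d0 *ᵥ y) := by
    intro x y
    have h1 : B x y = ∑ i, x i * B (Pi.single i 1) y := by
      have := key x (B.flip y)
      simpa using this
    rw [h1]
    rw [dotProduct]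
    refine Finset.sum_congr rfl fun i _ => ?_
    rw [key y (B (Pi.single i 1)), Matrix.mulVec, dotProduct, Finset.mul_sum,
      Finset.mul_sum]
    refine Finset.sum_congr rfl fun j _ => ?_
    simp only [hd0, Matrix.of_apply]
    ring
  -- symmetry
  have hd0symm : d0.IsSymm := by
    ext i j
    simp only [Matrix.transpose_apply, hd0, Matrix.of_apply]
    exact hsymm _ _
  -- relation aᵀ * d0 = d0 * a
  have hrel : aᵀ * d0 = d0 * a := by
    ext i j
    have l1 : B (a.mulVecLin (Pi.single i 1)) (Pi.single j 1) = (aᵀ * d0) i j := by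
      rw [hB, Matrix.mulVecLin_apply, Matrix.mulVec_single, Matrix.mulVec_single]
      simp [dotProduct, Matrix.mul_apply, Matrix.transpose_apply, mul_comm]
    have l2 : B (Pi.single i 1) (a.mulVecLin (Pi.single j 1)) = (d0 * a) i j := by
      rw [hB, Matrix.mulVecLin_apply, Matrix.mulVec_mulVec, Matrix.mulVec_single,
        single_dotProduct, one_mul]
      simp
    rw [← l1, ← l2]
    exact hcompat _ _
  -- invertibility
  have hdet : IsUnit d0.det := by
    rw [isUnit_iff_ne_zero]
    intro h0
    have h0' : d0ᵀ.det = 0 := by rw [Matrix.det_transpose]; exact h0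
    obtain ⟨v, hv0, hv⟩ := (Matrix.exists_mulVec_eq_zero_iff).mpr h0'
    refine hv0 (hnd v fun y => ?_)
    rw [hB, Matrix.dotProduct_mulVec, ← Matrix.mulVec_transpose, hv]
    simp
  have hd0unit : IsUnit d0 := (Matrix.isUnit_iff_isUnit_det d0).mpr hdet
  refine ⟨d0⁻¹, ?_, ?_, ?_⟩
  · exact (Matrix.isUnit_iff_isUnit_det _).mpr (Matrix.isUnit_nonsing_inv_det d0 hdet)
  · rw [Matrix.IsSymm, Matrix.transpose_nonsing_inv, hd0symm.eq]
  · rw [Matrix.nonsing_inv_nonsing_inv d0 hdet]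
    have h1 : aᵀ * d0 * d0⁻¹ = d0 * a * d0⁻¹ := by rw [hrel]
    rw [Matrix.mul_assoc, Matrix.mul_nonsing_inv _ hdet, Matrix.mul_one] at h1
    exact h1.symm
end

section
/- Every unitary complex n×n matrix g can be conjugated to its transpose by a symmetric unitary matrix: there exists s ∈ U(n) with sᵀ = s and s g s⁻¹ = gᵀ. -/
set_option maxHeartbeats 1000000

open Matrix Module.End

noncomputable section

/-- Joint orthonormal eigenbasis for two commuting symmetric operators. -/
private lemma joint_eigenbasis {E : Type*} [NormedAddCommGroup E] [InnerProductSpace ℂ E]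
    [FiniteDimensional ℂ E] {n : ℕ} (hn : Module.finrank ℂ E = n)
    (T₁ T₂ : E →ₗ[ℂ] E) (hS₁ : T₁.IsSymmetric) (hS₂ : T₂.IsSymmetric) (hC : Commute T₁ T₂) :
    ∃ (b : OrthonormalBasis (Fin n) ℂ E) (γ δ : Fin n → ℂ),
      ∀ a, T₁ (b a) = γ a • b a ∧ T₂ (b a) = δ a • b a := by
  classical
  have hInt0 := LinearMap.IsSymmetric.directSum_isInternal_of_commute hS₁ hS₂ hC
  have hOrth0 := LinearMap.IsSymmetric.orthogonalFamily_eigenspace_inf_eigenspace hS₁ hS₂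
  let V : ℂ × ℂ → Submodule ℂ E := fun i => eigenspace T₁ i.2 ⊓ eigenspace T₂ i.1
  have hInt : DirectSum.IsInternal (fun i : {i : ℂ × ℂ // V i ≠ ⊥} => V i.1) :=
    DirectSum.isInternal_ne_bot_iff.2 hInt0
  have hind : iSupIndep V :=
    ((DirectSum.isInternal_submodule_iff_iSupIndep_and_iSup_eq_top V).1 hInt0).1
  have : Fintype {i : ℂ × ℂ // V i ≠ ⊥} := hind.fintypeNeBotOfFiniteDimensional
  have hOrth : OrthogonalFamily ℂ (fun i : {i : ℂ × ℂ // V i ≠ ⊥} => ↥(V i.1))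
      (fun i => (V i.1).subtypeₗᵢ) := fun i j hij => hOrth0 (Subtype.coe_injective.ne hij)
  let b := hInt.subordinateOrthonormalBasis hn hOrth
  let μ : Fin n → {i : ℂ × ℂ // V i ≠ ⊥} :=
    fun a => hInt.subordinateOrthonormalBasisIndex hn a hOrth
  have hmem : ∀ a, b a ∈ eigenspace T₁ (μ a).1.2 ⊓ eigenspace T₂ (μ a).1.1 := fun a =>
    hInt.subordinateOrthonormalBasis_subordinate hn a hOrth
  exact ⟨b, fun a => (μ a).1.2, fun a => (μ a).1.1,
    fun a => ⟨mem_eigenspace_iff.1 (hmem a).1, mem_eigenspace_iff.1 (hmem a).2⟩⟩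

variable {n : ℕ}

private lemma unitary_diag (g : Matrix (Fin n) (Fin n) ℂ)
    (hg : g ∈ Matrix.unitaryGroup (Fin n) ℂ) :
    ∃ u ∈ Matrix.unitaryGroup (Fin n) ℂ, ∃ d : Fin n → ℂ,
      star u * g * u = diagonal d := by
  classical
  have h1 : star g * g = 1 := hg.1
  have h2 : g * star g = 1 := hg.2
  set A : Matrix (Fin n) (Fin n) ℂ := g + gᴴ with hAdef
  set B : Matrix (Fin n) (Fin n) ℂ := Complex.I • (gᴴ - g) with hBdef
  have hA : A.IsHermitian := by
    simp [Matrix.IsHermitian, hAdef, conjTranspose_add, add_comm]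
  have hB : B.IsHermitian := by
    simp only [Matrix.IsHermitian, hBdef, conjTranspose_smul, conjTranspose_sub,
      conjTranspose_conjTranspose, Complex.star_def, Complex.conj_I, neg_smul, smul_sub]
    module
  have hcomm : A * B = B * A := by
    simp only [hAdef, hBdef, Matrix.mul_smul, Matrix.smul_mul, Matrix.mul_add,
      Matrix.add_mul, Matrix.mul_sub, Matrix.sub_mul]
    rw [show gᴴ * g = 1 from h1, show g * gᴴ = 1 from h2]
    module
  have hmul : ∀ M N : Matrix (Fin n) (Fin n) ℂ,
      Matrix.toEuclideanLin (M * N) = (Matrix.toEuclideanLin M) ∘ₗ (Matrix.toEuclideanLin N) := by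
    intro M N
    rw [Matrix.toEuclideanLin_eq_toLin]
    exact Matrix.toLin_mul _ _ _ M N
  set T₁ := Matrix.toEuclideanLin A with hT₁def
  set T₂ := Matrix.toEuclideanLin B with hT₂def
  have hS₁ : T₁.IsSymmetric := Matrix.isHermitian_iff_isSymmetric.1 hA
  have hS₂ : T₂.IsSymmetric := Matrix.isHermitian_iff_isSymmetric.1 hB
  have hC : Commute T₁ T₂ := by
    simp only [Commute, SemiconjBy, Module.End.mul_eq_comp, hT₁def, hT₂def, ← hmul, hcomm]
  have hn : Module.finrank ℂ (EuclideanSpace ℂ (Fin n)) = n := by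
    simp [finrank_euclideanSpace]
  obtain ⟨b, γ, δ, hbe⟩ := joint_eigenbasis hn T₁ T₂ hS₁ hS₂ hC
  have hTe₁ : ∀ a, T₁ (b a) = γ a • b a := fun a => (hbe a).1
  have hTe₂ : ∀ a, T₂ (b a) = δ a • b a := fun a => (hbe a).2
  set d : Fin n → ℂ := fun a => (γ a + Complex.I * δ a) / 2 with hddef
  have hg2 : g = (2⁻¹ : ℂ) • (A + Complex.I • B) := by
    simp only [hAdef, hBdef, smul_smul, smul_add, smul_sub]
    rw [show Complex.I * Complex.I = -1 by simp [Complex.I_mul_I]]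
    module
  have hT : ∀ a, Matrix.toEuclideanLin g (b a) = d a • b a := by
    intro a
    rw [hg2, _root_.map_smul, map_add, _root_.map_smul]
    simp only [LinearMap.add_apply, LinearMap.smul_apply, ← hT₁def, ← hT₂def,
      hTe₁ a, hTe₂ a, smul_smul, hddef]
    rw [← add_smul, ← smul_assoc]
    congr 1
    simp [div_eq_mul_inv]
    ring
  -- the unitary of basis vectors
  set u : Matrix (Fin n) (Fin n) ℂ :=
    (EuclideanSpace.basisFun (Fin n) ℂ).toBasis.toMatrix b.toBasis with hudef
  have humem : u ∈ Matrix.unitaryGroup (Fin n) ℂ :=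
    (EuclideanSpace.basisFun (Fin n) ℂ).toMatrix_orthonormalBasis_mem_unitary b
  have hu_mulvec : ∀ j, u *ᵥ Pi.single j 1 = ⇑(b j) := by
    intro j
    simp only [mulVec_single, mul_one, MulOpposite.op_one, one_smul]
    rfl
  have hstar_mulvec : ∀ j, (star u) *ᵥ ⇑(b j) = Pi.single j 1 := by
    intro j
    rw [← hu_mulvec, mulVec_mulVec, humem.1, one_mulVec]
  have hgb : ∀ j, g *ᵥ ⇑(b j) = d j • ⇑(b j) := by
    intro j
    simpa only [Matrix.toEuclideanLin_apply, WithLp.ofLp_smul] using congr(⇑$(hT j))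
  refine ⟨u, humem, d, ?_⟩
  apply Matrix.toEuclideanLin.injective
  apply Module.Basis.ext (EuclideanSpace.basisFun (Fin n) ℂ).toBasis
  intro i
  simp only [Matrix.toEuclideanLin_apply, OrthonormalBasis.coe_toBasis,
    EuclideanSpace.basisFun_apply, EuclideanSpace.ofLp_single, ← mulVec_mulVec,
    hu_mulvec, hgb, Matrix.diagonal_mulVec_single, mulVec_smul, hstar_mulvec,
    WithLp.toLp_smul, PiLp.toLp_single, mul_one]
  apply PiLp.ext
  intro j
  simp only [PiLp.smul_apply, EuclideanSpace.single_apply, smul_eq_mul, mul_ite, mul_one, mul_zero]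

/-- Every complex unitary matrix `g` is conjugated to its transpose by a
symmetric unitary matrix. -/
theorem stmt_4 {n : ℕ} (g : Matrix (Fin n) (Fin n) ℂ)
    (hg : g ∈ Matrix.unitaryGroup (Fin n) ℂ) :
    ∃ s : Matrix (Fin n) (Fin n) ℂ,
      s ∈ Matrix.unitaryGroup (Fin n) ℂ ∧ sᵀ = s ∧ s * g * s⁻¹ = gᵀ := by
  obtain ⟨u, hu, d, hd⟩ := unitary_diag g hg
  have hu1 : star u * u = 1 := hu.1
  have hu2 : u * star u = 1 := hu.2
  have t1 : uᵀ * (star u)ᵀ = 1 := by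
    rw [← Matrix.transpose_mul, hu1, Matrix.transpose_one]
  have t2 : (star u)ᵀ * uᵀ = 1 := by
    rw [← Matrix.transpose_mul, hu2, Matrix.transpose_one]
  set s : Matrix (Fin n) (Fin n) ℂ := (star u)ᵀ * star u with hsdef
  have hstars : star s = u * uᵀ := by
    rw [hsdef, StarMul.star_mul, star_star]
    congr 1
    ext i j
    simp [Matrix.conjTranspose_apply, Matrix.transpose_apply]
  have hsmem : s ∈ Matrix.unitaryGroup (Fin n) ℂ := by
    constructor
    · rw [hstars, hsdef]
      calc u * uᵀ * ((star u)ᵀ * star u) = u * (uᵀ * (star u)ᵀ) * star u := by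
            simp only [Matrix.mul_assoc]
        _ = 1 := by rw [t1, Matrix.mul_one, hu2]
    · rw [hstars, hsdef]
      calc (star u)ᵀ * star u * (u * uᵀ) = (star u)ᵀ * (star u * u) * uᵀ := by
            simp only [Matrix.mul_assoc]
        _ = 1 := by rw [hu1, Matrix.mul_one, t2]
  have hsinv : s⁻¹ = star s := Matrix.inv_eq_left_inv hsmem.1
  have hsymm : sᵀ = s := by
    rw [hsdef, Matrix.transpose_mul, Matrix.transpose_transpose]
  have hgdec : g = u * Matrix.diagonal d * star u := by
    calc g = (u * star u) * g * (u * star u) := by rw [hu2, Matrix.one_mul, Matrix.mul_one]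
      _ = u * (star u * g * u) * star u := by simp only [Matrix.mul_assoc]
      _ = u * Matrix.diagonal d * star u := by rw [hd]
  refine ⟨s, hsmem, hsymm, ?_⟩
  rw [hsinv, hstars, hsdef]
  calc (star u)ᵀ * star u * g * (u * uᵀ)
      = (star u)ᵀ * (star u * g * u) * uᵀ := by simp only [Matrix.mul_assoc]
    _ = (star u)ᵀ * Matrix.diagonal d * uᵀ := by rw [hd]
    _ = gᵀ := by
        rw [hgdec]
        simp only [Matrix.transpose_mul, Matrix.diagonal_transpose, Matrix.mul_assoc]

end
end

section
/- Let A be a commutative local ring whose ideals form a finite chain A ⊋ 𝔭 ⊋ 𝔭² ⊋ … ⊋ 𝔭^e = {0} (e.g. A = E[T]/(p^e) with p irreducible). Let V be an A-module with a sesquilinear pairing ⟨·,·⟩ (relative to an involution τ of A satisfying ⟨v, a w⟩ = ⟨τ(a) v, w⟩), and let v ∈ V with ann_A(v) = 0. Then the restriction of ⟨·,·⟩ to the cyclic submodule Av is nondegenerate if and only if ⟨𝔭^{e-1} v, v⟩ ≠ {0}. -/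
/-- Nondegeneracy criterion for a cyclic submodule.  `A` is a commutative local
ring whose ideals form the finite chain `A ⊋ 𝔭 ⊋ 𝔭² ⊋ ⋯ ⊋ 𝔭^e = 0`, `V` is an
`A`-module equipped with an `ε`-hermitian pairing `B` (valued in a field `E`,
with involution `σ` on `E`) satisfying the adjoint relation
`B v (a • w) = B (τ a • v) w` for an involution `τ` of `A` preserving `𝔭`.
If `v ∈ V` has trivial annihilator, then the restriction of `B` to the cyclic
submodule `A v` is nondegenerate iff `B (𝔭^{e-1} v) v ≠ 0`. -/
theorem stmt_5 {E A V : Type*} [Field E] [CommRing A] [AddCommGroup V] [Module A V]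
    (τ : A ≃+* A) (hτ : ∀ a, τ (τ a) = a)
    (𝔭 : Ideal A) (e : ℕ) (he : 0 < e)
    (hideals : ∀ I : Ideal A, ∃ k : ℕ, I = 𝔭 ^ k)
    (hchain : ∀ k : ℕ, k < e → 𝔭 ^ (k + 1) < 𝔭 ^ k)
    (hnil : 𝔭 ^ e = ⊥)
    (hτ𝔭 : ∀ a ∈ 𝔭, τ a ∈ 𝔭)
    (σ : E ≃+* E) (hσ : ∀ c, σ (σ c) = c) (ε : E) (hε : ε = 1 ∨ ε = -1)
    (B : V → V → E)
    (hB₁ : ∀ u v w, B (u + v) w = B u w + B v w)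
    (hB₂ : ∀ u v w, B u (v + w) = B u v + B u w)
    (hherm : ∀ v w, B w v = ε * σ (B v w))
    (hadj : ∀ (a : A) (v w : V), B v (a • w) = B (τ a • v) w)
    (v : V) (hv : ∀ a : A, a • v = 0 → a = 0) :
    (∀ w ∈ Submodule.span A ({v} : Set V),
        (∀ u ∈ Submodule.span A ({v} : Set V), B u w = 0) → w = 0)
      ↔ ∃ a ∈ 𝔭 ^ (e - 1), B (a • v) v ≠ 0 := by
  have hτpow : ∀ k : ℕ, ∀ a ∈ 𝔭 ^ k, τ a ∈ 𝔭 ^ k := by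
    intro k a ha
    have hmap : Ideal.map (τ : A →+* A) (𝔭 ^ k) ≤ 𝔭 ^ k := by
      rw [Ideal.map_pow]
      exact Ideal.pow_right_mono
        (Ideal.map_le_iff_le_comap.mpr (fun x hx => hτ𝔭 x hx)) k
    exact hmap (Ideal.mem_map_of_mem _ ha)
  constructor
  · intro hnd
    -- pick a nonzero element of 𝔭^(e-1)
    have hlt : (⊥ : Ideal A) < 𝔭 ^ (e - 1) := by
      have := hchain (e - 1) (by omega)
      rwa [show e - 1 + 1 = e by omega, hnil] at this
    obtain ⟨p₀, hp₀mem, hp₀ne⟩ := Submodule.ne_bot_iff _ |>.mp hlt.ne'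
    have hw : p₀ • v ∈ Submodule.span A ({v} : Set V) :=
      Submodule.smul_mem _ _ (Submodule.mem_span_singleton_self v)
    have hwne : p₀ • v ≠ 0 := fun h => hp₀ne (hv p₀ h)
    have : ¬ (∀ u ∈ Submodule.span A ({v} : Set V), B u (p₀ • v) = 0) :=
      fun h => hwne (hnd _ hw h)
    push_neg at this
    obtain ⟨u, hu, hBu⟩ := this
    obtain ⟨c, rfl⟩ := Submodule.mem_span_singleton.mp hu
    refine ⟨τ p₀ * c, Ideal.mul_mem_right _ _ (hτpow _ _ hp₀mem), ?_⟩
    have key : B ((τ p₀ * c) • v) v = B (c • v) (p₀ • v) := by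
      rw [hadj p₀ (c • v) v, smul_smul]
    rw [key]
    exact hBu
  · rintro ⟨a, ha, hBa⟩ w hw horth
    obtain ⟨b, rfl⟩ := Submodule.mem_span_singleton.mp hw
    rcases eq_or_ne b 0 with rfl | hb
    · simp
    · exfalso
      obtain ⟨k, hk⟩ := hideals (Ideal.span {b})
      have hkle : k ≤ e - 1 := by
        by_contra hcon
        have : Ideal.span {b} ≤ ⊥ := by
          rw [hk, ← hnil]
          exact Ideal.pow_le_pow_right (by omega)
        exact hb (by simpa using this (Ideal.mem_span_singleton_self b))
      have hale : a ∈ Ideal.span {b} := by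
        rw [hk]
        exact Ideal.pow_le_pow_right hkle ha
      obtain ⟨c, rfl⟩ := Ideal.mem_span_singleton.mp hale
      apply hBa
      have h1 : (b * c) • v = c • (b • v) := by rw [mul_comm, ← smul_smul]
      rw [h1, hherm, hadj]
      rw [horth (τ c • v) (Submodule.smul_mem _ _ (Submodule.mem_span_singleton_self v))]
      simp
end

section
/- Let A = E[T]/(p^e) with maximal ideal 𝔭 and V an A-module with a compatible ε-hermitian form as above. Let x ∈ V with ann_A(x) = 0 and suppose Ax is degenerate; choose y ∈ V with ⟨p^{e-1} x, y⟩ ≠ 0. If Ax ∩ Ay ≠ {0}, then the cyclic submodule Ay is nondegenerate. -/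
/-- Setup as in the nondegeneracy criterion: `A` a commutative local ring whose
ideals form the chain `A ⊋ 𝔭 ⊋ ⋯ ⊋ 𝔭^e = 0`, `V` an `A`-module with an
`ε`-hermitian pairing `B` satisfying the adjoint relation with respect to an
involution `τ` of `A` preserving `𝔭`.  Let `x` have trivial annihilator and
suppose the cyclic submodule `A x` is degenerate; choose `y` with
`B (𝔭^{e-1} x) y ≠ 0`.  If `A x ∩ A y ≠ 0`, then `A y` is nondegenerate. -/
theorem stmt_6 {E A V : Type*} [Field E] [CommRing A] [AddCommGroup V] [Module A V]
    (τ : A ≃+* A) (hτ : ∀ a, τ (τ a) = a)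
    (𝔭 : Ideal A) (e : ℕ) (he : 0 < e)
    (hideals : ∀ I : Ideal A, ∃ k : ℕ, I = 𝔭 ^ k)
    (hchain : ∀ k : ℕ, k < e → 𝔭 ^ (k + 1) < 𝔭 ^ k)
    (hnil : 𝔭 ^ e = ⊥)
    (hτ𝔭 : ∀ a ∈ 𝔭, τ a ∈ 𝔭)
    (σ : E ≃+* E) (hσ : ∀ c, σ (σ c) = c) (ε : E) (hε : ε = 1 ∨ ε = -1)
    (B : V → V → E)
    (hB₁ : ∀ u v w, B (u + v) w = B u w + B v w)
    (hB₂ : ∀ u v w, B u (v + w) = B u v + B u w)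
    (hherm : ∀ v w, B w v = ε * σ (B v w))
    (hadj : ∀ (a : A) (v w : V), B v (a • w) = B (τ a • v) w)
    (x : V) (hx : ∀ a : A, a • x = 0 → a = 0)
    (hxdeg : ¬ (∀ w ∈ Submodule.span A ({x} : Set V),
        (∀ u ∈ Submodule.span A ({x} : Set V), B u w = 0) → w = 0))
    (y : V) (hy : ∃ a ∈ 𝔭 ^ (e - 1), B (a • x) y ≠ 0)
    (hmeet : Submodule.span A ({x} : Set V) ⊓ Submodule.span A ({y} : Set V) ≠ ⊥) :
    ∀ w ∈ Submodule.span A ({y} : Set V),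
      (∀ u ∈ Submodule.span A ({y} : Set V), B u w = 0) → w = 0 := by
  classical
  obtain ⟨a₀, ha₀, ha₀B⟩ := hy
  -- get a nonzero common element
  rw [Submodule.ne_bot_iff] at hmeet
  obtain ⟨v, hvmem, hv0⟩ := hmeet
  obtain ⟨hvx, hvy⟩ := Submodule.mem_inf.mp hvmem
  obtain ⟨c, hc⟩ := Submodule.mem_span_singleton.mp hvx
  have hc0 : c ≠ 0 := by rintro rfl; rw [zero_smul] at hc; exact hv0 hc.symm
  -- the ideal of scalars sending x into A y
  set J : Ideal A := Submodule.comap (LinearMap.toSpanSingleton A V x)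
    (Submodule.span A ({y} : Set V)) with hJ
  have hcJ : c ∈ J := by
    simp only [hJ, Submodule.mem_comap, LinearMap.toSpanSingleton_apply]
    rw [hc]; exact hvy
  obtain ⟨s, hs⟩ := hideals J
  have hse : s ≤ e - 1 := by
    by_contra h
    have : J ≤ 𝔭 ^ e := hs ▸ Ideal.pow_le_pow_right (by omega)
    have := this hcJ
    rw [hnil, Ideal.mem_bot] at this
    exact hc0 this
  have ha₀J : a₀ ∈ J := hs ▸ (Ideal.pow_le_pow_right hse ha₀)
  obtain ⟨d, hd⟩ : ∃ d : A, d • y = a₀ • x := by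
    have : a₀ • x ∈ Submodule.span A ({y} : Set V) := ha₀J
    exact Submodule.mem_span_singleton.mp this
  have hdB : B (d • y) y ≠ 0 := by rw [hd]; exact ha₀B
  intro w hw hperp
  obtain ⟨b, hb⟩ := Submodule.mem_span_singleton.mp hw
  -- d is not in the ideal generated by b
  have hdb : d ∉ Ideal.span ({b} : Set A) := by
    intro hmem
    obtain ⟨r, hr⟩ := Ideal.mem_span_singleton.mp hmem
    have h1 : B y (d • y) ≠ 0 := by
      intro h
      apply hdB
      rw [hherm y (d • y), h, map_zero, mul_zero]
    have h2 : B (τ r • y) w = B y (d • y) := by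
      rw [← hb, hadj b (τ r • y) y, hadj d y y, smul_smul, ← map_mul, hr, mul_comm]
    exact h1 (h2 ▸ hperp (τ r • y)
      (Submodule.smul_mem _ _ (Submodule.mem_span_singleton_self y)))
  obtain ⟨sb, hsb⟩ := hideals (Ideal.span ({b} : Set A))
  obtain ⟨t, ht⟩ := hideals (Ideal.span ({d} : Set A))
  have hdt : d ∈ 𝔭 ^ t := ht ▸ Ideal.mem_span_singleton_self d
  have hts : t < sb := by
    by_contra h
    exact hdb (hsb ▸ (Ideal.pow_le_pow_right (by omega) hdt))
  have hbmem : b ∈ Ideal.span ({d} : Set A) * 𝔭 := by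
    have h1 : b ∈ 𝔭 ^ sb := hsb ▸ Ideal.mem_span_singleton_self b
    have h2 : (𝔭 : Ideal A) ^ sb ≤ 𝔭 ^ (t + 1) := Ideal.pow_le_pow_right (by omega)
    have h3 : (𝔭 : Ideal A) ^ (t + 1) = Ideal.span ({d} : Set A) * 𝔭 := by
      rw [pow_succ, ht]
    exact h3 ▸ h2 h1
  -- everything in span{d} * 𝔭 kills y
  have hkill : ∀ z ∈ Ideal.span ({d} : Set A) * 𝔭, z • y = 0 := by
    intro z hz
    refine Submodule.mul_induction_on hz ?_ ?_
    · intro m hm n hn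
      obtain ⟨r, hr⟩ := Ideal.mem_span_singleton.mp hm
      have : (m * n) • y = (r * n * a₀) • x := by
        rw [hr, show d * r * n = (r * n) * d by ring, ← smul_smul, hd, smul_smul]
      rw [this]
      have hmem : r * n * a₀ ∈ 𝔭 ^ e := by
        have h1 : n * a₀ ∈ 𝔭 * 𝔭 ^ (e - 1) := Ideal.mul_mem_mul hn ha₀
        have h2 : (𝔭 : Ideal A) * 𝔭 ^ (e - 1) = 𝔭 ^ e := by
          rw [← pow_succ']
          congr 1
          omega
        have := h2 ▸ h1
        have := Ideal.mul_mem_left _ r this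
        rwa [mul_assoc]
      rw [hnil, Ideal.mem_bot] at hmem
      rw [hmem, zero_smul]
    · intro z₁ z₂ h₁ h₂
      rw [add_smul, h₁, h₂, add_zero]
  rw [← hb]
  exact hkill b hbmem
end

section
/- In the setup V = Ax ⊕ Ay with ⟨𝔭^{e-1}x, y⟩ ≠ 0 and ⟨𝔭^{e-1}x, x⟩ = ⟨𝔭^{e-1}y, y⟩ = 0, the map ay ↦ (a'x ↦ ⟨a'x, ay⟩) is an E-linear bijection from the τ-twist (Ay)^τ onto Hom_E(Ax, E). -/
/-- In the setup `V = Ax ⊕ Ay` with `B (𝔭^{e-1} x) y ≠ 0` and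
`B (𝔭^{e-1} x) x = B (𝔭^{e-1} y) y = 0`, the map `a y ↦ (a' x ↦ B (a' x) (a y))`
is an `E`-linear bijection from the `τ`-twist `(A y)^τ` onto `Hom_E (A x, E)`:
it is `σ`-semilinear in `a y`, injective, and hits every `E`-linear functional
on `A x`. -/
theorem stmt_9 {E A V : Type*} [Field E] [CommRing A] [Algebra E A]
    [AddCommGroup V] [Module A V] [Module E V] [IsScalarTower E A V]
    [FiniteDimensional E V]
    (τ : A ≃+* A) (hτ : ∀ a, τ (τ a) = a)
    (σ : E ≃+* E) (hσ : ∀ c, σ (σ c) = c)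
    (hcompat : ∀ c : E, τ (algebraMap E A c) = algebraMap E A (σ c))
    (𝔭 : Ideal A) (e : ℕ) (he : 0 < e)
    (hideals : ∀ I : Ideal A, ∃ k : ℕ, I = 𝔭 ^ k)
    (hchain : ∀ k : ℕ, k < e → 𝔭 ^ (k + 1) < 𝔭 ^ k)
    (hnil : 𝔭 ^ e = ⊥)
    (hτ𝔭 : ∀ a ∈ 𝔭, τ a ∈ 𝔭)
    (ε : E) (hε : ε = 1 ∨ ε = -1)
    (B : V → V → E)
    (hB₁ : ∀ u v w, B (u + v) w = B u w + B v w)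
    (hB₂ : ∀ u v w, B u (v + w) = B u v + B u w)
    (hBE : ∀ (c : E) (u w : V), B (c • u) w = c * B u w)
    (hherm : ∀ v w, B w v = ε * σ (B v w))
    (hadj : ∀ (a : A) (v w : V), B v (a • w) = B (τ a • v) w)
    (x y : V)
    (hx : ∀ a : A, a • x = 0 → a = 0) (hy : ∀ a : A, a • y = 0 → a = 0)
    (hxy : ∃ a ∈ 𝔭 ^ (e - 1), B (a • x) y ≠ 0)
    (hxx : ∀ a ∈ 𝔭 ^ (e - 1), B (a • x) x = 0)
    (hyy : ∀ a ∈ 𝔭 ^ (e - 1), B (a • y) y = 0)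
    (hsum : Submodule.span A ({x} : Set V) ⊔ Submodule.span A ({y} : Set V) = ⊤)
    (hmeet : Submodule.span A ({x} : Set V) ⊓ Submodule.span A ({y} : Set V) = ⊥) :
    (∀ (c : E) (u w : V), B u (c • w) = σ c * B u w) ∧
    (∀ w₁ w₂ : Submodule.span A ({y} : Set V),
      (∀ u : Submodule.span A ({x} : Set V), B (u : V) (w₁ : V) = B (u : V) (w₂ : V)) →
        w₁ = w₂) ∧
    (∀ φ : Submodule.span A ({x} : Set V) →ₗ[E] E,
      ∃ w : Submodule.span A ({y} : Set V),
        ∀ u : Submodule.span A ({x} : Set V), B (u : V) (w : V) = φ u) := by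
  classical
  -- basic consequences of additivity
  have hB0r : ∀ u : V, B u 0 = 0 := by
    intro u
    have h := hB₂ u 0 0
    rw [add_zero] at h
    exact (left_eq_add.mp h)
  have hBsub : ∀ u v w : V, B u (v - w) = B u v - B u w := by
    intro u v w
    have h := hB₂ u (v - w) w
    rw [sub_add_cancel] at h
    rw [h]; ring
  -- Part 1 : σ-semilinearity in the second slot
  have part1 : ∀ (c : E) (u w : V), B u (c • w) = σ c * B u w := by
    intro c u w
    rw [← algebraMap_smul A c w, hadj, hcompat, algebraMap_smul, hBE]
  obtain ⟨a₀, ha₀mem, ha₀⟩ := hxy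
  -- key nondegeneracy lemma
  have hkey : ∀ a : A, a ≠ 0 → ∃ c : A, B ((c * τ a) • x) y ≠ 0 := by
    intro a ha
    have hτa : τ a ≠ 0 := by
      intro h
      exact ha (by rw [← hτ a, h, map_zero])
    obtain ⟨k, hk⟩ := hideals (Ideal.span {τ a})
    have hklt : k < e := by
      by_contra hcon
      push_neg at hcon
      have hle : Ideal.span {τ a} ≤ 𝔭 ^ e := hk ▸ Ideal.pow_le_pow_right hcon
      rw [hnil] at hle
      have := hle (Ideal.mem_span_singleton_self (τ a))
      exact hτa (Submodule.mem_bot A |>.mp this)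
    have hmem : a₀ ∈ Ideal.span {τ a} := by
      rw [hk]
      exact Ideal.pow_le_pow_right (Nat.le_sub_one_of_lt hklt) ha₀mem
    obtain ⟨c, hc⟩ := Ideal.mem_span_singleton'.mp hmem
    exact ⟨c, by rw [hc]; exact ha₀⟩
  -- Part 2 : injectivity
  have part2 : ∀ w₁ w₂ : Submodule.span A ({y} : Set V),
      (∀ u : Submodule.span A ({x} : Set V), B (u : V) (w₁ : V) = B (u : V) (w₂ : V)) →
        w₁ = w₂ := by
    intro w₁ w₂ h
    have hw : ((w₁ : V) - (w₂ : V)) ∈ Submodule.span A ({y} : Set V) :=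
      Submodule.sub_mem _ w₁.2 w₂.2
    obtain ⟨a, haeq⟩ := Submodule.mem_span_singleton.mp hw
    have ha : a = 0 := by
      by_contra ha
      obtain ⟨c, hc⟩ := hkey a ha
      have hu : c • x ∈ Submodule.span A ({x} : Set V) :=
        Submodule.mem_span_singleton.mpr ⟨c, rfl⟩
      have h0 : B (c • x) ((w₁ : V) - (w₂ : V)) = 0 := by
        rw [hBsub, h ⟨c • x, hu⟩, sub_self]
      rw [← haeq, hadj, smul_smul, mul_comm] at h0
      exact hc h0
    apply Subtype.ext
    have : (w₁ : V) - (w₂ : V) = 0 := by rw [← haeq, ha, zero_smul]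
    exact sub_eq_zero.mp this
  refine ⟨part1, part2, ?_⟩
  -- Part 3 : surjectivity onto the dual
  -- E-linear inclusions
  set px : Submodule A V := Submodule.span A ({x} : Set V) with hpxdef
  set py : Submodule A V := Submodule.span A ({y} : Set V) with hpydef
  let inclX : px →ₗ[E] V :=
    { toFun := Subtype.val, map_add' := fun _ _ => rfl, map_smul' := fun _ _ => rfl }
  let inclY : py →ₗ[E] V :=
    { toFun := Subtype.val, map_add' := fun _ _ => rfl, map_smul' := fun _ _ => rfl }
  haveI finpx : FiniteDimensional E px :=
    FiniteDimensional.of_injective inclX Subtype.val_injective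
  haveI finpy : FiniteDimensional E py :=
    FiniteDimensional.of_injective inclY Subtype.val_injective
  -- E-linear equivalences A ≃ Ax, A ≃ Ay
  let fx : A →ₗ[E] px :=
    { toFun := fun a => ⟨a • x, Submodule.mem_span_singleton.mpr ⟨a, rfl⟩⟩,
      map_add' := fun a b => Subtype.ext (add_smul a b x),
      map_smul' := fun c a => Subtype.ext (smul_assoc c a x) }
  let fy : A →ₗ[E] py :=
    { toFun := fun a => ⟨a • y, Submodule.mem_span_singleton.mpr ⟨a, rfl⟩⟩,
      map_add' := fun a b => Subtype.ext (add_smul a b y),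
      map_smul' := fun c a => Subtype.ext (smul_assoc c a y) }
  have hfx : Function.Bijective fx := by
    constructor
    · intro a b hab
      have h1 : (a - b) • x = 0 := by
        rw [sub_smul, sub_eq_zero]
        exact congrArg Subtype.val hab
      exact sub_eq_zero.mp (hx _ h1)
    · intro u
      obtain ⟨a, ha⟩ := Submodule.mem_span_singleton.mp u.2
      exact ⟨a, Subtype.ext ha⟩
  have hfy : Function.Bijective fy := by
    constructor
    · intro a b hab
      have h1 : (a - b) • y = 0 := by
        rw [sub_smul, sub_eq_zero]
        exact congrArg Subtype.val hab
      exact sub_eq_zero.mp (hy _ h1)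
    · intro u
      obtain ⟨a, ha⟩ := Submodule.mem_span_singleton.mp u.2
      exact ⟨a, Subtype.ext ha⟩
  have hfinrank : Module.finrank E py = Module.finrank E px := by
    rw [← (LinearEquiv.ofBijective fy hfy).finrank_eq,
      (LinearEquiv.ofBijective fx hfx).finrank_eq]
  -- the semilinear map g
  let g : py → (px →ₗ[E] E) := fun w =>
    { toFun := fun u => B (u : V) (w : V),
      map_add' := fun u v => hB₁ _ _ _,
      map_smul' := fun c u => hBE c _ _ }
  have hg_inj : ∀ w : py, (∀ u : px, B (u : V) (w : V) = 0) → w = 0 := by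
    intro w hw
    apply part2 w 0
    intro u
    rw [hw u]
    have : ((0 : py) : V) = 0 := rfl
    rw [this, hB0r]
  -- the range of g as a submodule of the dual
  let S : Submodule E (px →ₗ[E] E) :=
    { carrier := { φ | ∃ w : py, ∀ u : px, B (u : V) (w : V) = φ u },
      add_mem' := by
        rintro φ ψ ⟨w, hw⟩ ⟨w', hw'⟩
        refine ⟨w + w', fun u => ?_⟩
        have : ((w + w' : py) : V) = (w : V) + (w' : V) := rfl
        rw [this, hB₂, hw u, hw' u]
        rfl
      zero_mem' := ⟨0, fun u => by
        have : ((0 : py) : V) = 0 := rfl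
        rw [this, hB0r]; rfl⟩,
      smul_mem' := by
        rintro c φ ⟨w, hw⟩
        refine ⟨σ.symm c • w, fun u => ?_⟩
        have : ((σ.symm c • w : py) : V) = σ.symm c • (w : V) := rfl
        rw [this, part1, σ.apply_symm_apply, hw u]
        rfl }
  -- basis of Ay and linear independence of its image under g
  let b := Module.finBasis E py
  let n := Module.finrank E py
  let v : Fin n → (px →ₗ[E] E) := fun i => g (b i)
  have hBsum : ∀ (u : V) (s : Finset (Fin n)) (f : Fin n → V),
      B u (∑ i ∈ s, f i) = ∑ i ∈ s, B u (f i) := by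
    intro u s f
    induction s using Finset.induction with
    | empty => simp [hB0r u]
    | insert _ _ hni ih =>
      rw [Finset.sum_insert hni, Finset.sum_insert hni, hB₂, ih]
  have hli : LinearIndependent E v := by
    rw [Fintype.linearIndependent_iff]
    intro cfun hsum0 i
    set w : py := ∑ j, σ.symm (cfun j) • b j with hwdef
    have hw0 : w = 0 := by
      apply hg_inj
      intro u
      have hcoe : (w : V) = ∑ j, σ.symm (cfun j) • ((b j : py) : V) := by
        rw [hwdef]
        simpa using (map_sum inclY (fun j => σ.symm (cfun j) • b j) Finset.univ).trans
          (by simp [inclY])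
      have heval := congrArg (fun φ : px →ₗ[E] E => φ u) hsum0
      simp only [LinearMap.coe_sum, Finset.sum_apply, LinearMap.smul_apply,
        LinearMap.zero_apply, smul_eq_mul] at heval
      rw [hcoe, hBsum]
      calc (∑ j, B (u : V) (σ.symm (cfun j) • ((b j : py) : V)))
          = ∑ j, cfun j * B (u : V) ((b j : py) : V) := by
            refine Finset.sum_congr rfl fun j _ => ?_
            rw [part1, σ.apply_symm_apply]
        _ = 0 := heval
    have hz := Fintype.linearIndependent_iff.mp b.linearIndependent
      (fun j => σ.symm (cfun j)) (by rw [← hwdef, hw0]) i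
    have : cfun i = σ (σ.symm (cfun i)) := (σ.apply_symm_apply _).symm
    rw [this, hz, map_zero]
  have hcard : Fintype.card (Fin n) = Module.finrank E (px →ₗ[E] E) := by
    have hdual : Module.finrank E (px →ₗ[E] E) = Module.finrank E px :=
      Subspace.dual_finrank_eq
    rw [Fintype.card_fin, hdual, ← hfinrank]
  have hspan : Submodule.span E (Set.range v) = ⊤ :=
    hli.span_eq_top_of_card_eq_finrank' hcard
  intro φ
  have hφS : φ ∈ S := by
    have hsub : Set.range v ⊆ (S : Set (px →ₗ[E] E)) := by
      rintro _ ⟨i, rfl⟩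
      exact ⟨b i, fun u => rfl⟩
    have : Submodule.span E (Set.range v) ≤ S := Submodule.span_le.mpr hsub
    rw [hspan] at this
    exact this trivial
  exact hφS
end

section
/- With γ ∈ A× the unique unit satisfying ⟨a y, x⟩ = ⟨a x, γ y⟩ for all a ∈ A (in the setting V = Ax ⊕ Ay above), one has γ · τ(γ) = 1. -/
/-- With `γ ∈ A×` the unique unit satisfying `B (a y) x = B (a x) (γ y)` for
all `a ∈ A` (in the setting `V = Ax ⊕ Ay` as before), one has `γ · τ(γ) = 1`. -/
theorem stmt_10 {E A V : Type*} [Field E] [CommRing A] [Algebra E A]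
    [AddCommGroup V] [Module A V] [Module E V] [IsScalarTower E A V]
    [FiniteDimensional E V]
    (τ : A ≃+* A) (hτ : ∀ a, τ (τ a) = a)
    (σ : E ≃+* E) (hσ : ∀ c, σ (σ c) = c)
    (hcompat : ∀ c : E, τ (algebraMap E A c) = algebraMap E A (σ c))
    (𝔭 : Ideal A) (e : ℕ) (he : 0 < e)
    (hideals : ∀ I : Ideal A, ∃ k : ℕ, I = 𝔭 ^ k)
    (hchain : ∀ k : ℕ, k < e → 𝔭 ^ (k + 1) < 𝔭 ^ k)
    (hnil : 𝔭 ^ e = ⊥)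
    (hτ𝔭 : ∀ a ∈ 𝔭, τ a ∈ 𝔭)
    (ε : E) (hε : ε = 1 ∨ ε = -1)
    (B : V → V → E)
    (hB₁ : ∀ u v w, B (u + v) w = B u w + B v w)
    (hB₂ : ∀ u v w, B u (v + w) = B u v + B u w)
    (hBE : ∀ (c : E) (u w : V), B (c • u) w = c * B u w)
    (hherm : ∀ v w, B w v = ε * σ (B v w))
    (hadj : ∀ (a : A) (v w : V), B v (a • w) = B (τ a • v) w)
    (x y : V)
    (hx : ∀ a : A, a • x = 0 → a = 0) (hy : ∀ a : A, a • y = 0 → a = 0)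
    (hxy : ∃ a ∈ 𝔭 ^ (e - 1), B (a • x) y ≠ 0)
    (hxx : ∀ a ∈ 𝔭 ^ (e - 1), B (a • x) x = 0)
    (hyy : ∀ a ∈ 𝔭 ^ (e - 1), B (a • y) y = 0)
    (hsum : Submodule.span A ({x} : Set V) ⊔ Submodule.span A ({y} : Set V) = ⊤)
    (hmeet : Submodule.span A ({x} : Set V) ⊓ Submodule.span A ({y} : Set V) = ⊥)
    (γ : A) (hγunit : IsUnit γ)
    (hγ : ∀ a : A, B (a • y) x = B (a • x) (γ • y)) :
    γ * τ γ = 1 := by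
  have hσε : σ ε = ε := by rcases hε with h | h <;> simp [h]
  have key : ∀ b : A, B ((τ γ * τ b) • x) y = ε * σ (B (b • x) y) := by
    intro b
    have h1 : B (τ b • y) x = ε * σ (B (b • x) y) := by
      rw [hherm x (τ b • y), hadj (τ b) x y, hτ]
    have h2 : B (τ b • y) x = B ((τ γ * τ b) • x) y := by
      rw [hγ (τ b), hadj γ (τ b • x) y, smul_smul]
    rw [← h2, h1]
  have key2 : ∀ b : A, B ((γ * τ γ * b) • x) y = B (b • x) y := by
    intro b
    have h1 := key (τ γ * τ b)
    have h2 := key b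
    have e1 : τ γ * τ (τ γ * τ b) = γ * τ γ * b := by
      rw [map_mul, hτ, hτ]; ring
    rw [e1] at h1
    rw [h1, h2, map_mul, hσε, hσ]
    rcases hε with h | h <;> simp [h, ← mul_assoc]
  have hsub : ∀ u v : V, B (u - v) y = B u y - B v y := by
    intro u v
    have h := hB₁ (u - v) v y
    rw [sub_add_cancel] at h
    exact eq_sub_of_add_eq h.symm
  have key3 : ∀ b : A, B (((γ * τ γ - 1) * b) • x) y = 0 := by
    intro b
    have hv : ((γ * τ γ - 1) * b) • x = (γ * τ γ * b) • x - b • x := by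
      rw [sub_mul, one_mul, sub_smul]
    rw [hv, hsub, key2, sub_self]
  set c := γ * τ γ - 1 with hc
  by_contra hne
  have hc0 : c ≠ 0 := fun h => hne (by have := sub_eq_zero.mp h; simpa using this)
  obtain ⟨k, hk⟩ := hideals (Ideal.span {c})
  have hklt : k < e := by
    by_contra hge
    push_neg at hge
    have hle : Ideal.span {c} ≤ ⊥ := by
      rw [hk, ← hnil]; exact Ideal.pow_le_pow_right hge
    exact hc0 (by simpa using hle (Ideal.subset_span (Set.mem_singleton c)))
  have hle : 𝔭 ^ (e - 1) ≤ Ideal.span {c} := by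
    rw [hk]; exact Ideal.pow_le_pow_right (by omega)
  obtain ⟨a, ha, hBa⟩ := hxy
  obtain ⟨b, hb⟩ := Ideal.mem_span_singleton'.mp (hle ha)
  apply hBa
  rw [← hb, mul_comm]
  exact key3 b
end

section
/- Let (V, ⟨·,·⟩) be a finite-dimensional vector space over E with a nondegenerate ε-hermitian form (relative to τ generating Gal(E/F), [E:F] ≤ 2), and let GU(V) be its similitude group with multiplier map μ. Fix an anti-unitary involution h ∈ Aut_F(V) (⟨hv, hv'⟩ = ⟨v', v⟩, h² = 1) and set ι(g) = μ(g)⁻¹ h g h⁻¹. Assume Theorem A: g = h₁ h₂ with h₁ anti-unitary, h₁² = 1, h₂ anti-unitary similitude with h₂² = μ(g). Then for every g ∈ GU(V), the elements ι(g) and g⁻¹ are conjugate by an element of U(V); explicitly (h₁ h) ι(g) (h₁ h)⁻¹ = g⁻¹. -/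
/-- Let `(V, B)` be a nondegenerate `ε`-hermitian space over `E` (with
involution `τ`), `g` a similitude with multiplier `β`, and `h` a fixed
anti-unitary involution; set `ι(g) = β⁻¹ • (h ∘ g ∘ h⁻¹)`.  Given Theorem A,
i.e. a factorization `g = h₁ ∘ h₂` with `h₁` an anti-unitary involution and
`h₂` an anti-unitary similitude with `h₂² = β`, the elements `ι(g)` and `g⁻¹`
are conjugate by the element `h₁ ∘ h` of `U(V)`:  `h₁ ∘ h` is an isometry and
`(h₁ h) ι(g) (h₁ h)⁻¹ = g⁻¹`. -/
theorem stmt_11 {E V : Type*} [Field E] [AddCommGroup V] [Module E V]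
    [FiniteDimensional E V]
    (τ : E ≃+* E) (hτ : ∀ c, τ (τ c) = c)
    (ε : E) (hε : ε = 1 ∨ ε = -1)
    (B : V → V → E)
    (hB₁ : ∀ u v w, B (u + v) w = B u w + B v w)
    (hBl : ∀ (c : E) (u w : V), B (c • u) w = c * B u w)
    (hherm : ∀ v w, B w v = ε * τ (B v w))
    (hnd : ∀ v : V, (∀ w : V, B v w = 0) → v = 0)
    (g : V ≃ₗ[E] V) (β : E) (hβ0 : β ≠ 0) (hβτ : τ β = β)
    (hg : ∀ v w, B (g v) (g w) = β * B v w)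
    (h : V → V)
    (hhadd : ∀ v w, h (v + w) = h v + h w)
    (hhsemi : ∀ (c : E) (v : V), h (c • v) = τ c • h v)
    (hhinv : ∀ v, h (h v) = v)
    (hhanti : ∀ v w, B (h v) (h w) = B w v)
    (h₁ : V → V)
    (h₁add : ∀ v w, h₁ (v + w) = h₁ v + h₁ w)
    (h₁semi : ∀ (c : E) (v : V), h₁ (c • v) = τ c • h₁ v)
    (h₁inv : ∀ v, h₁ (h₁ v) = v)
    (h₁anti : ∀ v w, B (h₁ v) (h₁ w) = B w v)
    (h₂ : V → V)
    (h₂add : ∀ v w, h₂ (v + w) = h₂ v + h₂ w)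
    (h₂semi : ∀ (c : E) (v : V), h₂ (c • v) = τ c • h₂ v)
    (h₂sq : ∀ v, h₂ (h₂ v) = β • v)
    (h₂anti : ∀ v w, B (h₂ v) (h₂ w) = β * B w v)
    (hfact : ∀ v, g v = h₁ (h₂ v)) :
    (∀ v w, B (h₁ (h v)) (h₁ (h w)) = B v w) ∧
    (∀ v, h₁ (h (β⁻¹ • h (g (h₁ v)))) = g.symm v) := by
  have hτβi : τ β⁻¹ = β⁻¹ := by rw [map_inv₀, hβτ]
  constructor
  · intro v w
    rw [h₁anti, hhanti]
  · intro v
    rw [hhsemi, hτβi, hhinv, h₁semi, hτβi, LinearEquiv.eq_symm_apply, map_smul,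
      hfact (h₁ v), h₁inv, hfact, h₂sq, h₁semi, hβτ, h₁inv, smul_smul,
      inv_mul_cancel₀ hβ0, one_smul]
end

section
/- For a non-archimedean local field F of residual characteristic p and residue field of cardinality q, an element x ∈ F× lies in 1 + 𝔭_F if and only if x admits an n-th root in F× for every positive integer n not divisible by p. -/
open Metric IsUltrametricDist Finset

section Aux

variable {F : Type*} [NontriviallyNormedField F] [IsUltrametricDist F]

lemma aux_norm_sub_le_max (a b : F) : ‖a - b‖ ≤ max ‖a‖ ‖b‖ := by
  rw [sub_eq_add_neg]
  simpa using norm_add_le_max a (-b)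

/-- Norm of a natural coprime to p is 1. -/
lemma aux_norm_nat {p : ℕ} (hp : p.Prime) (hpF : ‖(p : F)‖ < 1) {n : ℕ} (hn : ¬ p ∣ n) :
    ‖(n : F)‖ = 1 := by
  have h1 : ‖(n : F)‖ ≤ 1 := norm_natCast_le_one F n
  refine le_antisymm h1 ?_
  have hcop : IsCoprime (n : ℤ) (p : ℤ) := by
    rw [Int.isCoprime_iff_gcd_eq_one, Int.gcd_natCast_natCast]
    exact Nat.Coprime.symm (hp.coprime_iff_not_dvd.mpr hn)
  obtain ⟨a, b, hab⟩ := hcop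
  have hcast : (a : F) * n + (b : F) * p = 1 := by
    have := congrArg (fun z : ℤ => (z : F)) hab
    push_cast at this
    simpa using this
  by_contra hlt
  push_neg at hlt
  have h2 : ‖(a : F) * (n : F)‖ < 1 := by
    rw [norm_mul]
    calc ‖(a : F)‖ * ‖(n : F)‖ ≤ 1 * ‖(n : F)‖ := by
          gcongr; exact norm_intCast_le_one F a
      _ = ‖(n : F)‖ := one_mul _
      _ < 1 := hlt
  have h3 : ‖(b : F) * (p : F)‖ < 1 := by
    rw [norm_mul]
    calc ‖(b : F)‖ * ‖(p : F)‖ ≤ 1 * ‖(p : F)‖ := by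
          gcongr; exact norm_intCast_le_one F b
      _ = ‖(p : F)‖ := one_mul _
      _ < 1 := hpF
  have := norm_add_le_max ((a : F) * n) ((b : F) * p)
  rw [hcast] at this
  simp only [norm_one] at this
  exact absurd (this.trans_lt (max_lt h2 h3)) (lt_irrefl 1)

/-- Geometric series bound: if u is in the closed unit ball and close to 1, so are its powers. -/
lemma aux_pow_sub_one {u : F} (hu : ‖u‖ ≤ 1) {c : ℝ} (h : ‖u - 1‖ ≤ c) (k : ℕ) :
    ‖u ^ k - 1‖ ≤ c := by
  rw [← geom_sum_mul, norm_mul]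
  have hs : ‖∑ i ∈ range k, u ^ i‖ ≤ 1 :=
    norm_sum_le_of_forall_le_of_nonneg zero_le_one
      (fun i _ => by rw [norm_pow]; exact pow_le_one₀ (norm_nonneg u) hu)
  calc ‖∑ i ∈ range k, u ^ i‖ * ‖u - 1‖ ≤ 1 * c := by
        exact mul_le_mul hs h (norm_nonneg _) zero_le_one
    _ = c := one_mul _

end Aux

open Metric IsUltrametricDist Finset Filter

section Aux2

variable {F : Type*} [NontriviallyNormedField F] [IsUltrametricDist F] [LocallyCompactSpace F]

/-- Discreteness of the value group. -/
lemma aux_gap : ∃ r : ℝ, 0 < r ∧ r < 1 ∧ ∀ z : F, ‖z‖ < 1 → ‖z‖ ≤ r := by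
  have hP : ProperSpace F := ProperSpace.of_locallyCompactSpace F
  by_contra h
  push_neg at h
  have hseq : ∀ k : ℕ, ∃ z : F, ‖z‖ < 1 ∧ 1 - 1/(k+1) < ‖z‖ := by
    intro k
    obtain ⟨z, hz1, hz2⟩ := h (max (1/2) (1 - 1/(k+1)))
      (lt_max_of_lt_left one_half_pos)
      (max_lt one_half_lt_one (by
        have : (0:ℝ) < 1/(k+1) := by positivity
        linarith))
    exact ⟨z, hz1, lt_of_le_of_lt (le_max_right _ _) hz2⟩
  choose z hz1 hz2 using hseq
  have hmem : ∀ k, z k ∈ closedBall (0:F) 1 := fun k => by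
    simpa using (hz1 k).le
  obtain ⟨w, hw, φ, hφ, hconv⟩ :=
    (isCompact_closedBall (0:F) 1).tendsto_subseq hmem
  have hnorm_tendsto : Tendsto (fun k => ‖z k‖) atTop (nhds 1) := by
    have h1 : Tendsto (fun k : ℕ => 1 - 1/((k:ℝ)+1)) atTop (nhds 1) := by
      have := tendsto_one_div_add_atTop_nhds_zero_nat (𝕜 := ℝ)
      simpa using (tendsto_const_nhds (x := (1:ℝ))).sub this
    exact tendsto_of_tendsto_of_tendsto_of_le_of_le h1 tendsto_const_nhds
      (fun k => (hz2 k).le) (fun k => (hz1 k).le)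
  have hwn : ‖w‖ = 1 := by
    have h2 : Tendsto (fun k => ‖z (φ k)‖) atTop (nhds ‖w‖) :=
      (continuous_norm.tendsto w).comp hconv
    have h3 : Tendsto (fun k => ‖z (φ k)‖) atTop (nhds 1) :=
      hnorm_tendsto.comp hφ.tendsto_atTop
    exact tendsto_nhds_unique h2 h3
  have : ∀ᶠ k in atTop, dist (z (φ k)) w < 1 :=
    (tendsto_iff_dist_tendsto_zero.mp hconv).eventually (eventually_lt_nhds zero_lt_one)
  obtain ⟨k, hk⟩ := this.exists
  have hne : ‖z (φ k)‖ ≠ ‖-w‖ := by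
    rw [norm_neg, hwn]; exact (hz1 _).ne
  have : ‖z (φ k) - w‖ = max ‖z (φ k)‖ ‖-w‖ := by
    rw [sub_eq_add_neg]
    exact norm_add_eq_max_of_norm_ne_norm hne
  rw [dist_eq_norm, this, norm_neg, hwn] at hk
  have := le_max_right ‖z (φ k)‖ (1:ℝ)
  linarith

/-- Pigeonhole: every unit has a small power close to 1. -/
lemma aux_pigeon : ∃ m : ℕ, 0 < m ∧ ∀ u : F, ‖u‖ = 1 →
    ∃ d : ℕ, 0 < d ∧ d ≤ m ∧ ‖u ^ d - 1‖ < 1 := by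
  have hP : ProperSpace F := ProperSpace.of_locallyCompactSpace F
  have hcs : IsCompact (sphere (0:F) 1) := isCompact_sphere 0 1
  have hcover : sphere (0:F) 1 ⊆ ⋃ y ∈ sphere (0:F) 1, ball y 1 := by
    intro y hy
    exact Set.mem_biUnion hy (mem_ball_self zero_lt_one)
  obtain ⟨b, hbsub, hbfin, hbcov⟩ :=
    hcs.elim_finite_subcover_image (fun y _ => isOpen_ball) hcover
  classical
  refine ⟨hbfin.toFinset.card + 1, Nat.succ_pos _, fun u hu => ?_⟩
  have hup : ∀ i : ℕ, u ^ i ∈ sphere (0:F) 1 := fun i => by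
    simp [norm_pow, hu]
  have hch : ∀ i : ℕ, ∃ c ∈ hbfin.toFinset, u ^ i ∈ ball c 1 := by
    intro i
    obtain ⟨c, hc, hc2⟩ := Set.mem_iUnion₂.mp (hbcov (hup i))
    exact ⟨c, hbfin.mem_toFinset.mpr hc, hc2⟩
  choose f hf1 hf2 using hch
  set m := hbfin.toFinset.card
  have hcard : hbfin.toFinset.card < (Finset.range (m + 1)).card := by
    simp [m]
  obtain ⟨i, hi, j, hj, hij, hfij⟩ :=
    Finset.exists_ne_map_eq_of_card_lt_of_maps_to hcard (fun i _ => hf1 i)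
  wlog hlt : i < j generalizing i j
  · exact this j hj i hi hij.symm hfij.symm ((hij.lt_or_gt).resolve_left hlt)
  have hdist : ‖u ^ i - u ^ j‖ < 1 := by
    have h1 : ‖u ^ i - f i‖ < 1 := by simpa [dist_eq_norm] using hf2 i
    have h2 : ‖u ^ j - f i‖ < 1 := by
      have := hf2 j; rw [← hfij] at this; simpa [dist_eq_norm] using this
    calc ‖u ^ i - u ^ j‖ = ‖(u ^ i - f i) - (u ^ j - f i)‖ := by ring_nf
      _ ≤ max ‖u ^ i - f i‖ ‖u ^ j - f i‖ := aux_norm_sub_le_max _ _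
      _ < 1 := max_lt h1 h2
  refine ⟨j - i, Nat.sub_pos_of_lt hlt, ?_, ?_⟩
  · exact (Nat.sub_le j i).trans (Finset.mem_range.mp hj).le
  · have hfac : u ^ i - u ^ j = -(u ^ i * (u ^ (j - i) - 1)) := by
      rw [mul_sub, mul_one, ← pow_add, Nat.add_sub_cancel' hlt.le]
      ring
    have hni : ‖u ^ i‖ = 1 := by rw [norm_pow, hu, one_pow]
    rw [hfac, norm_neg, norm_mul, hni, one_mul] at hdist
    exact hdist

end Aux2
section Aux3

variable {F : Type*} [NontriviallyNormedField F] [IsUltrametricDist F]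

/-- No p-torsion in the residue classes. -/
lemma aux_ptor {p : ℕ} (hp : p.Prime) (hpF : ‖(p : F)‖ < 1) {u : F} (hu : ‖u‖ ≤ 1)
    (h : ‖u ^ p - 1‖ < 1) : ‖u - 1‖ < 1 := by
  have key := add_pow_prime_eq hp u (-1 : F)
  set S : F := ∑ k ∈ Finset.Ioo 0 p, u ^ k * (-1 : F) ^ (p - k) * ((p.choose k / p : ℕ) : F)
    with hS
  have hSnorm : ‖S‖ ≤ 1 := by
    refine norm_sum_le_of_forall_le_of_nonneg zero_le_one (fun k _ => ?_)
    calc ‖u ^ k * (-1 : F) ^ (p - k) * ((p.choose k / p : ℕ) : F)‖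
        = ‖u‖ ^ k * ‖(-1 : F)‖ ^ (p - k) * ‖((p.choose k / p : ℕ) : F)‖ := by
          rw [norm_mul, norm_mul, norm_pow, norm_pow]
      _ ≤ 1 * 1 * 1 := by
          have h1 : ‖u‖ ^ k ≤ 1 := pow_le_one₀ (norm_nonneg _) hu
          have h2 : ‖(-1 : F)‖ ^ (p - k) ≤ 1 := by simp
          have h3 : ‖((p.choose k / p : ℕ) : F)‖ ≤ 1 := norm_natCast_le_one F _
          exact mul_le_mul (mul_le_mul h1 h2 (pow_nonneg (norm_nonneg _) _) zero_le_one)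
            h3 (norm_nonneg _) (by norm_num)
      _ = 1 := by norm_num
  have hexp : (u - 1 : F) ^ p = (u ^ p - 1) + ((-1 : F) ^ p + 1) + (p : F) * S := by
    have : (u + (-1 : F)) ^ p = u ^ p + (-1 : F) ^ p + (p : F) * S := by
      rw [key]; congr 1; rw [hS, Finset.mul_sum, Finset.mul_sum]
      apply Finset.sum_congr rfl; intro k hk
      obtain ⟨hk1, hk2⟩ := Finset.mem_Ioo.mp hk
      obtain ⟨a, rfl⟩ : ∃ a, k = a + 1 := ⟨k - 1, by omega⟩
      obtain ⟨b, hb⟩ : ∃ b, p - (a + 1) = b + 1 := ⟨p - (a + 1) - 1, by omega⟩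
      rw [hb, show a + 1 - 1 = a by omega, show b + 1 - 1 = b by omega]; ring
    rw [← sub_eq_add_neg] at this
    rw [this]; ring
  have hmid : ‖(-1 : F) ^ p + 1‖ < 1 := by
    rcases hp.eq_two_or_odd' with h2 | hodd
    · subst h2
      norm_num
      calc ‖(2 : F)‖ = ‖((2 : ℕ) : F)‖ := by norm_num
        _ < 1 := by simpa using hpF
    · rw [hodd.neg_one_pow]
      simp
  have hbig : ‖(u - 1) ^ p‖ < 1 := by
    rw [hexp]
    calc ‖(u ^ p - 1) + ((-1 : F) ^ p + 1) + (p : F) * S‖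
        ≤ max ‖(u ^ p - 1) + ((-1 : F) ^ p + 1)‖ ‖(p : F) * S‖ :=
          IsUltrametricDist.norm_add_le_max _ _
      _ < 1 := by
          apply max_lt
          · exact lt_of_le_of_lt (IsUltrametricDist.norm_add_le_max _ _) (max_lt h hmid)
          · rw [norm_mul]
            calc ‖(p : F)‖ * ‖S‖ ≤ ‖(p : F)‖ * 1 :=
                  mul_le_mul_of_nonneg_left hSnorm (norm_nonneg _)
              _ = ‖(p : F)‖ := mul_one _
              _ < 1 := hpF
  rw [norm_pow] at hbig
  exact (pow_lt_one_iff_of_nonneg (norm_nonneg _) hp.ne_zero).mp hbig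

lemma aux_ptor_iter {p : ℕ} (hp : p.Prime) (hpF : ‖(p : F)‖ < 1) {u : F} (hu : ‖u‖ ≤ 1)
    (a : ℕ) (h : ‖u ^ (p ^ a) - 1‖ < 1) : ‖u - 1‖ < 1 := by
  induction a with
  | zero => simpa using h
  | succ a ih =>
    apply ih
    apply aux_ptor hp hpF (by rw [norm_pow]; exact pow_le_one₀ (norm_nonneg _) hu)
    rw [← pow_mul, ← pow_succ]
    exact h

/-- Divisibility upgrade. -/
lemma aux_dvd_pow {u : F} (hu : ‖u‖ ≤ 1) {d M : ℕ} (hdM : d ∣ M)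
    (h : ‖u ^ d - 1‖ < 1) : ‖u ^ M - 1‖ < 1 := by
  obtain ⟨k, rfl⟩ := hdM
  rw [pow_mul]
  have := aux_pow_sub_one (u := u ^ d)
    (by rw [norm_pow]; exact pow_le_one₀ (norm_nonneg _) hu) (c := ‖u ^ d - 1‖) le_rfl k
  exact lt_of_le_of_lt this h

/-- There is an exponent `n` prime to `p` killing all residue classes of units. -/
lemma aux_exponent [LocallyCompactSpace F] {p : ℕ} (hp : p.Prime) (hpF : ‖(p : F)‖ < 1) :
    ∃ n : ℕ, 0 < n ∧ ¬ p ∣ n ∧ ∀ u : F, ‖u‖ = 1 → ‖u ^ n - 1‖ < 1 := by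
  obtain ⟨m, hm, hunit⟩ := aux_pigeon (F := F)
  set M := m.factorial with hM
  have hM0 : M ≠ 0 := Nat.factorial_ne_zero m
  set a := M.factorization p with ha
  set n := M / p ^ a with hn
  have hfact : p ^ a * n = M := Nat.ordProj_mul_ordCompl_eq_self M p
  refine ⟨n, Nat.ordCompl_pos p hM0, Nat.not_dvd_ordCompl hp hM0, fun u hu => ?_⟩
  obtain ⟨d, hd0, hdm, hd⟩ := hunit u hu
  have hdvd : d ∣ M := Nat.dvd_factorial hd0 hdm
  have hMlt : ‖u ^ M - 1‖ < 1 := aux_dvd_pow hu.le hdvd hd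
  have : ‖(u ^ n) ^ (p ^ a) - 1‖ < 1 := by
    rw [← pow_mul, mul_comm, hfact]
    exact hMlt
  exact aux_ptor_iter hp hpF
    (by rw [norm_pow]; exact pow_le_one₀ (norm_nonneg _) hu.le) a this

end Aux3
/-- For a non-archimedean local field `F` (here: a nontrivially normed,
ultrametric, locally compact field) of residual characteristic `p`
(the unique prime with `‖(p : F)‖ < 1`), an element `x ∈ F×` lies in
`1 + 𝔭_F` iff it admits an `n`-th root for every positive integer `n` not
divisible by `p`. -/
theorem stmt_15 {F : Type*} [NontriviallyNormedField F] [IsUltrametricDist F]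
    [LocallyCompactSpace F] (p : ℕ) (hp : p.Prime) (hpF : ‖(p : F)‖ < 1)
    (x : F) (hx : x ≠ 0) :
    ‖x - 1‖ < 1 ↔ ∀ n : ℕ, 0 < n → ¬ (p ∣ n) → ∃ y : F, y ≠ 0 ∧ y ^ n = x := by
  have hP : ProperSpace F := ProperSpace.of_locallyCompactSpace F
  constructor
  · -- forward: Hensel via Banach fixed point
    intro hlt n hn0 hpn
    have hnn : ‖(n : F)‖ = 1 := aux_norm_nat hp hpF hpn
    have hnF : (n : F) ≠ 0 := by
      intro h; rw [h, norm_zero] at hnn; norm_num at hnn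
    set c := ‖x - 1‖ with hc
    have hc0 : 0 ≤ c := norm_nonneg _
    set T : F → F := fun y => y - (y ^ n - x) / n with hT
    set s : Set F := Metric.closedBall (1 : F) c with hs
    have hmem : ∀ y : F, y ∈ s ↔ ‖y - 1‖ ≤ c := by
      intro y; rw [hs, Metric.mem_closedBall, dist_eq_norm]
    have hynorm : ∀ y : F, y ∈ s → ‖y‖ ≤ 1 := by
      intro y hy
      have : y = (y - 1) + 1 := by ring
      rw [this]
      exact le_trans (IsUltrametricDist.norm_add_le_max _ _)
        (max_le (((hmem y).mp hy).trans hlt.le) (by simp))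
    have hpow : ∀ y : F, y ∈ s → ‖y ^ n - x‖ ≤ c := by
      intro y hy
      have h1 : ‖y ^ n - 1‖ ≤ c := aux_pow_sub_one (hynorm y hy) ((hmem y).mp hy) n
      have : y ^ n - x = (y ^ n - 1) - (x - 1) := by ring
      rw [this]
      exact le_trans (aux_norm_sub_le_max _ _) (max_le h1 le_rfl)
    have hmt : Set.MapsTo T s s := by
      intro y hy
      rw [hmem]
      have hTy : T y - 1 = (y - 1) - (y ^ n - x) / n := by rw [hT]; ring
      rw [hTy]
      refine le_trans (aux_norm_sub_le_max _ _) (max_le ((hmem y).mp hy) ?_)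
      rw [norm_div, hnn, div_one]
      exact hpow y hy
    have hcontr : ∀ y ∈ s, ∀ z ∈ s, ‖T y - T z‖ ≤ c * ‖y - z‖ := by
      intro y hy z hz
      set S : F := ∑ i ∈ Finset.range n, y ^ i * z ^ (n - 1 - i) with hSdef
      have hgeo : S * (y - z) = y ^ n - z ^ n := geom_sum₂_mul y z n
      have hTyz : T y - T z = (y - z) * (((n : F) - S) / n) := by
        rw [hT]
        field_simp
        linear_combination hgeo
      have hterm : ∀ i ∈ Finset.range n, ‖1 - y ^ i * z ^ (n - 1 - i)‖ ≤ c := by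
        intro i _
        have hy1 : ‖y ^ i - 1‖ ≤ c := aux_pow_sub_one (hynorm y hy) ((hmem y).mp hy) i
        have hz1 : ‖z ^ (n - 1 - i) - 1‖ ≤ c :=
          aux_pow_sub_one (hynorm z hz) ((hmem z).mp hz) _
        have hid : 1 - y ^ i * z ^ (n - 1 - i)
            = -((y ^ i - 1) + y ^ i * (z ^ (n - 1 - i) - 1)) := by ring
        rw [hid, norm_neg]
        refine le_trans (IsUltrametricDist.norm_add_le_max _ _) (max_le hy1 ?_)
        rw [norm_mul]
        calc ‖y ^ i‖ * ‖z ^ (n - 1 - i) - 1‖ ≤ 1 * c := by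
              refine mul_le_mul ?_ hz1 (norm_nonneg _) zero_le_one
              rw [norm_pow]; exact pow_le_one₀ (norm_nonneg _) (hynorm y hy)
          _ = c := one_mul _
      have hnS : ‖(n : F) - S‖ ≤ c := by
        have hsum : (n : F) - S = ∑ i ∈ Finset.range n, (1 - y ^ i * z ^ (n - 1 - i)) := by
          rw [Finset.sum_sub_distrib, hSdef]
          simp
        rw [hsum]
        exact IsUltrametricDist.norm_sum_le_of_forall_le_of_nonneg hc0 hterm
      rw [hTyz, norm_mul, norm_div, hnn, div_one, mul_comm]
      exact mul_le_mul hnS le_rfl (norm_nonneg _) hc0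
    set K : NNReal := Real.toNNReal c with hK
    have hKlt : K < 1 := by
      rw [hK, ← Real.toNNReal_one]
      exact (Real.toNNReal_lt_toNNReal_iff zero_lt_one).mpr hlt
    have hlip : LipschitzWith K (hmt.restrict T s s) := by
      apply LipschitzWith.of_dist_le_mul
      rintro ⟨y, hy⟩ ⟨z, hz⟩
      rw [Subtype.dist_eq, Subtype.dist_eq]
      simp only [Set.MapsTo.val_restrict_apply]
      rw [dist_eq_norm, dist_eq_norm]
      have := hcontr y hy z hz
      rwa [hK, Real.coe_toNNReal c hc0]
    have hcomplete : IsComplete s := (Metric.isClosed_closedBall).isComplete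
    have h1s : (1 : F) ∈ s := by rw [hmem]; simp [hc0]
    obtain ⟨y, hys, hfix, -, -⟩ :=
      ContractingWith.exists_fixedPoint' hcomplete hmt ⟨hKlt, hlip⟩ h1s (edist_ne_top _ _)
    have hTy : T y = y := hfix
    have hyn : y ^ n = x := by
      have : (y ^ n - x) / n = 0 := by
        have := sub_eq_zero.mpr hTy.symm
        rw [hT] at this
        simpa using this
      rcases div_eq_zero_iff.mp this with h | h
      · exact sub_eq_zero.mp h
      · exact absurd h hnF
    refine ⟨y, ?_, hyn⟩
    intro h0
    rw [h0] at hys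
    have := (hmem 0).mp hys
    simp only [zero_sub, norm_neg, norm_one] at this
    exact absurd (lt_of_le_of_lt this hlt) (lt_irrefl 1)
  · -- reverse
    intro H
    obtain ⟨r, hr0, hr1, hr⟩ := aux_gap (F := F)
    have hx1 : ‖x‖ = 1 := by
      by_contra hne
      have hxn : 0 < ‖x‖ := norm_pos_iff.mpr hx
      have hsm : 0 < min ‖x‖ ‖x‖⁻¹ := lt_min hxn (by positivity)
      obtain ⟨k, hk⟩ := exists_pow_lt_of_lt_one hsm hr1
      set n : ℕ := if p ∣ (k + 1) then k + 2 else k + 1 with hn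
      have hn0 : 0 < n := by rw [hn]; split <;> omega
      have hkn : k ≤ n := by rw [hn]; split <;> omega
      have hpn : ¬ p ∣ n := by
        rw [hn]; split
        · rename_i hdvd
          intro h2
          have h1 : p ∣ 1 := by
            have := Nat.dvd_sub h2 hdvd
            simpa using this
          exact Nat.Prime.one_lt hp |>.ne' (Nat.eq_one_of_dvd_one h1 ▸ rfl)
        · assumption
      have hrn : r ^ n < min ‖x‖ ‖x‖⁻¹ :=
        lt_of_le_of_lt (pow_le_pow_of_le_one hr0.le hr1.le hkn) hk
      obtain ⟨y, hy0, hyx⟩ := H n hn0 hpn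
      have hyn : ‖y‖ ^ n = ‖x‖ := by rw [← norm_pow, hyx]
      rcases lt_or_gt_of_ne hne with hlt | hgt
      · have hylt : ‖y‖ < 1 := by
          have : ‖y‖ ^ n < 1 := hyn ▸ hlt
          exact (pow_lt_one_iff_of_nonneg (norm_nonneg _) hn0.ne').mp this
        have hyr : ‖y‖ ≤ r := hr y hylt
        have : ‖x‖ ≤ r ^ n := by
          rw [← hyn]
          exact pow_le_pow_left₀ (norm_nonneg _) hyr n
        have := lt_of_le_of_lt this (lt_of_lt_of_le hrn (min_le_left _ _))
        exact absurd this (lt_irrefl _)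
      · have hygt : 1 < ‖y‖ := by
          by_contra hle
          push_neg at hle
          have : ‖y‖ ^ n ≤ 1 := pow_le_one₀ (norm_nonneg _) hle
          rw [hyn] at this
          exact absurd hgt (not_lt.mpr this)
        have hyinv : ‖y⁻¹‖ < 1 := by
          rw [norm_inv]
          exact inv_lt_one_of_one_lt₀ hygt
        have hyr : ‖y⁻¹‖ ≤ r := hr _ hyinv
        have : ‖x‖⁻¹ ≤ r ^ n := by
          rw [← hyn, ← inv_pow, ← norm_inv]
          exact pow_le_pow_left₀ (norm_nonneg _) hyr n
        have := lt_of_le_of_lt this (lt_of_lt_of_le hrn (min_le_right _ _))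
        exact absurd this (lt_irrefl _)
    obtain ⟨n, hn0, hpn, hU⟩ := aux_exponent (F := F) hp hpF
    obtain ⟨y, hy0, hyx⟩ := H n hn0 hpn
    have hyn : ‖y‖ ^ n = 1 := by rw [← norm_pow, hyx, hx1]
    have hy1 : ‖y‖ = 1 := by
      rcases lt_trichotomy ‖y‖ 1 with h | h | h
      · have := pow_lt_one₀ (norm_nonneg _) h hn0.ne'
        rw [hyn] at this; exact absurd this (lt_irrefl _)
      · exact h
      · have := one_lt_pow₀ h hn0.ne'
        rw [hyn] at this; exact absurd this (lt_irrefl _)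
    rw [← hyx]
    exact hU y hy1
end

section
/- Let G be a locally compact group containing a compact subgroup of maximal (finite, positive) Haar volume. Then every continuous automorphism of G preserves the Haar measure: if μ_G ∘ γ = c_γ μ_G for a continuous automorphism γ, then c_γ = 1. -/
open MeasureTheory

/-- Let `G` be a locally compact group with Haar measure `μ` containing a
compact subgroup `K` of maximal (finite, positive) Haar volume.  Then every
continuous automorphism of `G` preserves the Haar measure: if
`μ (γ '' S) = c * μ S` for all `S`, then `c = 1`. -/
theorem stmt_16 {G : Type*} [Group G] [TopologicalSpace G] [IsTopologicalGroup G]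
    [LocallyCompactSpace G] [MeasurableSpace G] [BorelSpace G]
    (μ : Measure G) [μ.IsHaarMeasure]
    (K : Subgroup G) (hKc : IsCompact (K : Set G))
    (hKpos : 0 < μ (K : Set G)) (hKfin : μ (K : Set G) < ⊤)
    (hKmax : ∀ K' : Subgroup G, IsCompact ((K' : Set G)) → μ (K' : Set G) ≤ μ (K : Set G))
    (γ : G ≃* G) (hγ : Continuous γ) (hγ' : Continuous γ.symm)
    (c : ENNReal) (hc : ∀ S : Set G, μ (γ '' S) = c * μ S) :
    c = 1 := by
  have hmap : ((K.map γ.toMonoidHom : Subgroup G) : Set G) = γ '' (K : Set G) := rfl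
  have hmap' : ((K.map γ.symm.toMonoidHom : Subgroup G) : Set G) = γ.symm '' (K : Set G) := rfl
  -- c ≤ 1
  have h1 : c * μ (K : Set G) ≤ μ (K : Set G) := by
    rw [← hc]
    have := hKmax (K.map γ.toMonoidHom) (by rw [hmap]; exact hKc.image hγ)
    rwa [hmap] at this
  -- 1 ≤ c : μ K = μ (γ '' (γ.symm '' K)) = c * μ (γ.symm '' K) ≤ c * μ K
  have h2 : μ (K : Set G) ≤ c * μ (K : Set G) := by
    have himg : γ '' (γ.symm '' (K : Set G)) = (K : Set G) := by
      ext x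
      simp [Set.mem_image]
    have hK' := hKmax (K.map γ.symm.toMonoidHom) (by rw [hmap']; exact hKc.image hγ')
    rw [hmap'] at hK'
    calc μ (K : Set G) = c * μ (γ.symm '' (K : Set G)) := by rw [← hc, himg]
      _ ≤ c * μ (K : Set G) := mul_le_mul_right hK' c
  have hne : μ (K : Set G) ≠ 0 := hKpos.ne'
  have hnt : μ (K : Set G) ≠ ⊤ := hKfin.ne
  have hle : c ≤ 1 := by
    rw [← ENNReal.mul_le_mul_iff_left hne hnt, one_mul]; exact h1
  have hge : 1 ≤ c := by
    rw [← ENNReal.mul_le_mul_iff_left hne hnt, one_mul]; exact h2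
  exact le_antisymm hle hge
end
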